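/- arXiv:hep-th/0407108 — 6 statements merged into one kernel-verified Lean document; each statement's English description precedes it below -/
import Mathlib

section
/- Holomorphic branches of solutions of the rescaled twisted Bethe system. For every choice of integers (n_1,…,n_N) ∈ {0,…,M−1}^N and every w ∈ ℂ with w^M = q^{2(1−N)}, there exist ε > 0 and holomorphic functions u_1,…,u_N on the disc {θ ∈ ℂ : |θ| < ε} such that Ỹ_θ(u_j(θ)|u(θ)) = 0 for all j = 1,…,N and all |θ| < ε, and u_j(0) = (q^{−1} − q)·w·e^{2πi n_j/M}; moreover this solution is unique among continuous ℂ^N-valued functions defined on a neighbourhood of θ = 0 taking these values at θ = 0. -/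
open Complex Matrix Finset

noncomputable section

/-- Spin configurations of a chain of length `M` (value `0` = spin up). -/
abbrev Conf (M : ℕ) := Fin M → Fin 2

/-- The quantum space `H = (ℂ²)^{⊗M}`, realized as functions on configurations. -/
abbrev QS (M : ℕ) := Conf M → ℂ

/-- The operator acting at site `n` by the 2×2 matrix `A` and as identity elsewhere. -/
def siteOp {M : ℕ} (n : Fin M) (A : Matrix (Fin 2) (Fin 2) ℂ) :
    Module.End ℂ (QS M) where
  toFun f := fun s => ∑ j : Fin 2, A (s n) j * f (Function.update s n j)
  map_add' f g := by
    funext s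
    simp [mul_add, Finset.sum_add_distrib]
  map_smul' c f := by
    funext s
    simp only [Pi.smul_apply, smul_eq_mul, RingHom.id_apply, Finset.mul_sum]
    exact Finset.sum_congr rfl fun j _ => by ring

def pauliX : Matrix (Fin 2) (Fin 2) ℂ := !![0, 1; 1, 0]
def pauliY : Matrix (Fin 2) (Fin 2) ℂ := !![0, -Complex.I; Complex.I, 0]
def pauliZ : Matrix (Fin 2) (Fin 2) ℂ := !![1, 0; 0, -1]
/-- `σ⁺ = (σˣ + iσʸ)/2`. -/
def pauliP : Matrix (Fin 2) (Fin 2) ℂ := !![0, 1; 0, 0]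
/-- `σ⁻ = (σˣ − iσʸ)/2`. -/
def pauliM : Matrix (Fin 2) (Fin 2) ℂ := !![0, 0; 1, 0]

/-- The `L`-operator at site `n` with spectral parameter `lam`. -/
def Lmat (M : ℕ) (η lam : ℂ) (n : Fin M) :
    Matrix (Fin 2) (Fin 2) (Module.End ℂ (QS M)) :=
  !![siteOp n !![Complex.sinh (lam + η/2), 0; 0, Complex.sinh (lam - η/2)],
       Complex.sinh η • siteOp n pauliM;
     Complex.sinh η • siteOp n pauliP,
       siteOp n !![Complex.sinh (lam - η/2), 0; 0, Complex.sinh (lam + η/2)]]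

/-- The monodromy matrix `T(λ) = L_M(λ) ⋯ L_1(λ)`. -/
def Tmon (M : ℕ) (η lam : ℂ) : Matrix (Fin 2) (Fin 2) (Module.End ℂ (QS M)) :=
  ((List.ofFn fun n : Fin M => Lmat M η lam n).reverse).prod

def Aop (M : ℕ) (η lam : ℂ) : Module.End ℂ (QS M) := Tmon M η lam 0 0
def Bop (M : ℕ) (η lam : ℂ) : Module.End ℂ (QS M) := Tmon M η lam 0 1
def Cop (M : ℕ) (η lam : ℂ) : Module.End ℂ (QS M) := Tmon M η lam 1 0
def Dop (M : ℕ) (η lam : ℂ) : Module.End ℂ (QS M) := Tmon M η lam 1 1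

/-- The twisted transfer matrix `T_κ(μ) = A(μ) + κ D(μ)`. -/
def Tk (M : ℕ) (η κ μ : ℂ) : Module.End ℂ (QS M) := Aop M η μ + κ • Dop M η μ

/-- The transfer matrix `T(μ) = A(μ) + D(μ)`. -/
def Ttm (M : ℕ) (η μ : ℂ) : Module.End ℂ (QS M) := Tk M η 1 μ

/-- The all-spins-up configuration. -/
def upC (M : ℕ) : Conf M := fun _ => 0

/-- The vacuum vector `|0⟩` (all spins up). -/
def vac (M : ℕ) : QS M := fun s => if s = upC M then 1 else 0

/-- The vacuum expectation value `⟨0|O|0⟩`. -/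
def vev {M : ℕ} (O : Module.End ℂ (QS M)) : ℂ := (O (vac M)) (upC M)

/-- `∏_{j=1}^N B(λ_j)`. -/
def prodB (M : ℕ) (η : ℂ) {N : ℕ} (lam : Fin N → ℂ) : Module.End ℂ (QS M) :=
  (List.ofFn fun j : Fin N => Bop M η (lam j)).prod

/-- `∏_{j=1}^N C(λ_j)`. -/
def prodC (M : ℕ) (η : ℂ) {N : ℕ} (lam : Fin N → ℂ) : Module.End ℂ (QS M) :=
  (List.ofFn fun j : Fin N => Cop M η (lam j)).prod

/-- `a(μ) = sinh^M(μ + η/2)`. -/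
def af (M : ℕ) (η μ : ℂ) : ℂ := (Complex.sinh (μ + η/2)) ^ M

/-- `d(μ) = sinh^M(μ − η/2)`. -/
def df (M : ℕ) (η μ : ℂ) : ℂ := (Complex.sinh (μ - η/2)) ^ M

/-- `Y_κ(μ|λ)`. -/
def Yf (M : ℕ) (η κ : ℂ) {N : ℕ} (μ : ℂ) (lam : Fin N → ℂ) : ℂ :=
  af M η μ * ∏ k, Complex.sinh (lam k - μ + η)
    + κ * df M η μ * ∏ k, Complex.sinh (lam k - μ - η)

/-- `τ_κ(μ|λ)`. -/
def tauf (M : ℕ) (η κ : ℂ) {N : ℕ} (μ : ℂ) (lam : Fin N → ℂ) : ℂ :=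
  af M η μ * ∏ k, (Complex.sinh (lam k - μ + η) / Complex.sinh (lam k - μ))
    + κ * df M η μ * ∏ k, (Complex.sinh (μ - lam k + η) / Complex.sinh (μ - lam k))

/-- The twisted Bethe equations `Y_κ(λ_j|λ) = 0`, `j = 1,…,N`. -/
def BetheSol (M : ℕ) (η κ : ℂ) {N : ℕ} (lam : Fin N → ℂ) : Prop :=
  ∀ j, Yf M η κ (lam j) lam = 0

/-- Admissibility: `d(λ_j) ∏_{k≠j} sinh(λ_j − λ_k + η) ≠ 0` for all `j`. -/
def Admissible (M : ℕ) (η : ℂ) {N : ℕ} (lam : Fin N → ℂ) : Prop :=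
  ∀ j, df M η (lam j) * ∏ k ∈ Finset.univ.erase j, Complex.sinh (lam j - lam k + η) ≠ 0

/-- The bare one-particle energy `E(λ)`. -/
def Ebare (η lam : ℂ) : ℂ :=
  2 * (Complex.sinh η) ^ 2 / (Complex.sinh (lam + η/2) * Complex.sinh (lam - η/2))

/-- `t(λ,μ) = sinh η /(sinh(λ−μ) sinh(λ−μ+η))`. -/
def tfun (η lam mu : ℂ) : ℂ :=
  Complex.sinh η / (Complex.sinh (lam - mu) * Complex.sinh (lam - mu + η))

/-- The matrix `Ω_κ(λ,μ|ν)`. -/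
def Omega (M : ℕ) (η κ : ℂ) {n n' : ℕ} (lam mu : Fin n → ℂ) (nu : Fin n' → ℂ) :
    Matrix (Fin n) (Fin n) ℂ :=
  Matrix.of fun j k =>
    af M η (mu k) * tfun η (lam j) (mu k) * ∏ a, Complex.sinh (nu a - mu k + η)
      - κ * df M η (mu k) * tfun η (mu k) (lam j) * ∏ a, Complex.sinh (nu a - mu k - η)

/-- Exponential of an endomorphism of the (finite-dimensional) quantum space. -/
def endExp {M : ℕ} (A : Module.End ℂ (QS M)) : Module.End ℂ (QS M) :=
  Matrix.toLin (Pi.basisFun ℂ (Conf M)) (Pi.basisFun ℂ (Conf M))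
    (NormedSpace.exp
      (LinearMap.toMatrix (Pi.basisFun ℂ (Conf M)) (Pi.basisFun ℂ (Conf M)) A))

/-- Entrywise complex derivative of an operator-valued function at a point. -/
def endDeriv {M : ℕ} (F : ℂ → Module.End ℂ (QS M)) (z : ℂ) : Module.End ℂ (QS M) :=
  Matrix.toLin (Pi.basisFun ℂ (Conf M)) (Pi.basisFun ℂ (Conf M))
    (Matrix.of fun i j =>
      deriv (fun w =>
        LinearMap.toMatrix (Pi.basisFun ℂ (Conf M)) (Pi.basisFun ℂ (Conf M)) (F w) i j) z)

/-- The next site, with periodic identification `M+1 ≡ 1`. -/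
def nxt {M : ℕ} (m : Fin M) : Fin M := ⟨(m + 1) % M, Nat.mod_lt _ m.pos⟩

/-- The XXZ Hamiltonian `H⁰` with periodic boundary conditions. -/
def Ham (M : ℕ) (η : ℂ) : Module.End ℂ (QS M) :=
  ∑ m : Fin M,
    (siteOp m pauliX * siteOp (nxt m) pauliX + siteOp m pauliY * siteOp (nxt m) pauliY
      + Complex.cosh η • (siteOp m pauliZ * siteOp (nxt m) pauliZ - 1))

/-- The twisted Hamiltonian `H⁰_κ = 2 sinh η · T_κ′(η/2) T_κ(η/2)⁻¹ − 2M cosh η`. -/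
def HamK (M : ℕ) (η κ : ℂ) : Module.End ℂ (QS M) :=
  (2 * Complex.sinh η) • (endDeriv (fun lam => Tk M η κ lam) (η/2)
      * Ring.inverse (Tk M η κ (η/2)))
    - ((2 * M : ℂ) * Complex.cosh η) • 1

/-- The third component of total spin `S_z`. -/
def SzOp (M : ℕ) : Module.End ℂ (QS M) := (2 : ℂ)⁻¹ • ∑ m : Fin M, siteOp m pauliZ

/-- The generating function `Q_κ(m,t)`. -/
def Qgen (M : ℕ) (η : ℂ) {N : ℕ} (lam : Fin N → ℂ) (κ : ℂ) (m : ℕ) (t : ℝ) : ℂ :=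
  vev (prodC M η lam * (Tk M η κ (η/2)) ^ m
      * endExp ((Complex.I * (t : ℂ)) • HamK M η κ)
      * (Ring.inverse (Ttm M η (η/2))) ^ m
      * endExp ((-(Complex.I * (t : ℂ))) • Ham M η)
      * prodB M η lam)
    / vev (prodC M η lam * prodB M η lam)

/-- Partial derivative of a function of `N` complex variables in the `k`-th variable. -/
def pderiv {N : ℕ} (F : (Fin N → ℂ) → ℂ) (k : Fin N) (z : Fin N → ℂ) : ℂ :=
  deriv (fun w => F (Function.update z k w)) (z k)

/-- Iterated counterclockwise circle integral `∮_{|z_1-c_1|=r} dz_1 ⋯ ∮_{|z_n-c_n|=r} dz_n F(z)`. -/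
def iterCircle : (n : ℕ) → ((Fin n → ℂ) → ℂ) → (Fin n → ℂ) → ℝ → ℂ
  | 0, F, _, _ => F (fun i => i.elim0)
  | n + 1, F, c, r =>
      circleIntegral
        (fun z => iterCircle n (fun w => F (Fin.cons z w)) (fun i => c i.succ) r) (c 0) r


/-- The rescaled twisted Bethe system `Ỹ_θ(u_j|u)`. -/
def Ytil (M N : ℕ) (q θ : ℂ) (u : Fin N → ℂ) (j : Fin N) : ℂ :=
  (u j) ^ M * ∏ a ∈ Finset.univ.erase j, (θ * (u j - q ^ 2 * u a) + q - q⁻¹)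
    - (θ * u j - q + q⁻¹) ^ M *
        ∏ a ∈ Finset.univ.erase j, (θ * (u j - q ^ (-2 : ℤ) * u a) + q⁻¹ - q ^ (-3 : ℤ))


lemma Ytil_zero' (M N : ℕ) (q : ℂ) (u : Fin N → ℂ) (j : Fin N) :
    Ytil M N q 0 u j = u j ^ M * (q - q⁻¹) ^ (N - 1)
      - (q⁻¹ - q) ^ M * (q⁻¹ - q ^ (-3:ℤ)) ^ (N - 1) := by
  simp [Ytil, Finset.prod_const, Finset.card_erase_of_mem, Finset.card_univ, neg_add_eq_sub]

lemma Ytil_contDiff (M N : ℕ) (q : ℂ) :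
    ContDiff ℂ 1 (fun p : ℂ × (Fin N → ℂ) => ((p.1 : ℂ), fun j => Ytil M N q p.1 p.2 j)) := by
  apply contDiff_fst.prodMk
  apply contDiff_pi.2
  intro j
  unfold Ytil
  apply ContDiff.sub
  · apply ContDiff.mul
    · fun_prop
    · exact contDiff_prod fun a _ => by fun_prop
  · apply ContDiff.mul
    · fun_prop
    · exact contDiff_prod fun a _ => by fun_prop

/-- Holomorphic branches of solutions of the rescaled twisted Bethe system. -/
theorem holomorphic_branches_rescaled_Bethe
    (M : ℕ) (hM : 2 ≤ M) (hMe : Even M) (N : ℕ) (hN : 1 ≤ N) (hNM : N ≤ M)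
    (η : ℂ) (hη : Complex.sinh η ≠ 0) :
    ∀ n : Fin N → Fin M, ∀ w : ℂ, w ^ M = (Complex.exp η) ^ (2 * (1 - (N : ℤ))) →
      ∃ ε : ℝ, 0 < ε ∧ ∃ u : Fin N → ℂ → ℂ,
        (∀ j, DifferentiableOn ℂ (u j) (Metric.ball (0 : ℂ) ε)) ∧
        (∀ θ ∈ Metric.ball (0 : ℂ) ε, ∀ j,
          Ytil M N (Complex.exp η) θ (fun i => u i θ) j = 0) ∧
        (∀ j, u j 0 = ((Complex.exp η)⁻¹ - Complex.exp η) * w *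
          Complex.exp (2 * (Real.pi : ℂ) * Complex.I * ((n j : ℕ) : ℂ) / (M : ℂ))) ∧
        (∀ (v : ℂ → Fin N → ℂ) (s : Set ℂ), s ∈ nhds (0 : ℂ) → ContinuousOn v s →
          (∀ θ ∈ s, ∀ j, Ytil M N (Complex.exp η) θ (v θ) j = 0) →
          (∀ j, v 0 j = ((Complex.exp η)⁻¹ - Complex.exp η) * w *
            Complex.exp (2 * (Real.pi : ℂ) * Complex.I * ((n j : ℕ) : ℂ) / (M : ℂ))) →
          ∀ᶠ θ in nhds (0 : ℂ), ∀ j, v θ j = u j θ) := by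
  intro n w hw
  set q : ℂ := Complex.exp η with hqd
  have hq : q ≠ 0 := Complex.exp_ne_zero η
  have hq2 : q - q⁻¹ = 2 * Complex.sinh η := by
    rw [hqd, ← Complex.exp_neg, Complex.sinh]
    ring
  have hqq : q - q⁻¹ ≠ 0 := by
    rw [hq2]; exact mul_ne_zero two_ne_zero hη
  have hM0 : (M:ℂ) ≠ 0 := Nat.cast_ne_zero.2 (by omega)
  have hw0 : w ≠ 0 := by
    intro h0
    rw [h0, zero_pow (by omega : M ≠ 0)] at hw
    exact zpow_ne_zero _ (Complex.exp_ne_zero η) hw.symm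
  set u₀ : Fin N → ℂ := fun j => (q⁻¹ - q) * w *
      Complex.exp (2 * (Real.pi : ℂ) * Complex.I * ((n j : ℕ) : ℂ) / (M : ℂ)) with hu₀d
  have hu₀ : ∀ j, u₀ j ≠ 0 := fun j =>
    mul_ne_zero (mul_ne_zero (fun h0 => hqq (by
      have : q⁻¹ - q = -(q - q⁻¹) := by ring
      rw [this] at h0; exact neg_eq_zero.1 h0)) hw0) (Complex.exp_ne_zero _)
  set c : ℂ := (q - q⁻¹) ^ (N - 1) with hc
  set K : ℂ := (q⁻¹ - q) ^ M * (q⁻¹ - q ^ (-3:ℤ)) ^ (N - 1) with hK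
  have hc0 : c ≠ 0 := pow_ne_zero _ hqq
  -- the zero-order equations hold at `u₀`
  have hY0 : ∀ j, Ytil M N q 0 u₀ j = 0 := by
    intro j
    rw [Ytil_zero', ← hc, ← hK, sub_eq_zero, hu₀d]
    have h1 : Complex.exp (2 * (Real.pi : ℂ) * Complex.I * ((n j : ℕ) : ℂ) / (M : ℂ)) ^ M
        = 1 := by
      rw [← Complex.exp_nat_mul]
      have : (M : ℂ) * (2 * (Real.pi : ℂ) * Complex.I * ((n j : ℕ) : ℂ) / (M : ℂ))
          = ((n j : ℕ) : ℂ) * (2 * (Real.pi : ℂ) * Complex.I) := by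
        field_simp
      rw [this]
      exact_mod_cast Complex.exp_int_mul_two_pi_mul_I ((n j : ℕ) : ℤ)
    have h3 : q⁻¹ - q ^ (-3:ℤ) = q ^ (-2:ℤ) * (q - q⁻¹) := by
      rw [_root_.zpow_neg, _root_.zpow_neg, show ((3:ℤ)) = ((3:ℕ):ℤ) by norm_num,
        show ((2:ℤ)) = ((2:ℕ):ℤ) by norm_num, zpow_natCast, zpow_natCast]
      field_simp
    have h4 : (q ^ (-2:ℤ)) ^ (N - 1) = q ^ (2 * (1 - (N:ℤ))) := by
      rw [← zpow_natCast (q ^ (-2:ℤ)) (N-1), ← _root_.zpow_mul]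
      congr 1
      push_cast [Nat.cast_sub hN]
      ring
    rw [hc, hK, mul_pow, mul_pow, h1, mul_one, hw, h3, mul_pow, h4]
    ring
  -- the auxiliary map `G`
  obtain ⟨G, hGdef⟩ : ∃ G : ℂ × (Fin N → ℂ) → ℂ × (Fin N → ℂ),
      G = fun p => ((p.1 : ℂ), fun j => Ytil M N q p.1 p.2 j) := ⟨_, rfl⟩
  have hGc : ContDiff ℂ 1 G := hGdef ▸ Ytil_contDiff M N q
  have hGa : G (0, u₀) = (0, 0) := by
    rw [hGdef]; exact Prod.ext rfl (funext fun j => hY0 j)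
  have hGf : HasFDerivAt G (fderiv ℂ G (0, u₀)) (0, u₀) :=
    (hGc.differentiable one_ne_zero (0, u₀)).hasFDerivAt
  set L : (ℂ × (Fin N → ℂ)) →L[ℂ] (ℂ × (Fin N → ℂ)) := fderiv ℂ G (0, u₀) with hLdef
  -- the derivative of `G` at `(0, u₀)` is bijective
  have hL1 : ∀ p : ℂ × (Fin N → ℂ), (L p).1 = p.1 := by
    intro p
    have h1 : HasFDerivAt (fun p : ℂ × (Fin N → ℂ) => (G p).1)
        ((ContinuousLinearMap.fst ℂ ℂ (Fin N → ℂ)).comp L) (0, u₀) :=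
      (ContinuousLinearMap.fst ℂ ℂ (Fin N → ℂ)).hasFDerivAt.comp _ hGf
    have h2 : HasFDerivAt (fun p : ℂ × (Fin N → ℂ) => (G p).1)
        (ContinuousLinearMap.fst ℂ ℂ (Fin N → ℂ)) (0, u₀) := by
      rw [hGdef]; exact hasFDerivAt_fst
    exact DFunLike.congr_fun (h1.unique h2) p
  have hL2 : ∀ (x : Fin N → ℂ) (j : Fin N),
      (L (0, x)).2 j = (M * u₀ j ^ (M-1) * x j) * c := by
    intro x j
    have hlin : HasDerivAt (fun s : ℂ => u₀ + s • x) x 0 := by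
      simpa using ((hasDerivAt_id (0:ℂ)).smul_const x).const_add u₀
    have hin : HasDerivAt (fun s : ℂ => (((0:ℂ), u₀ + s • x) : ℂ × (Fin N → ℂ)))
        (((0:ℂ), x) : ℂ × (Fin N → ℂ)) 0 := (hasDerivAt_const (x := (0:ℂ)) (c := (0:ℂ))).prodMk hlin
    have hGf' : HasFDerivAt G L ((0:ℂ), u₀ + (0:ℂ) • x) := by simpa using hGf
    have hcomp : HasDerivAt (fun s : ℂ => G (0, u₀ + s • x)) (L (0, x)) 0 :=
      hGf'.comp_hasDerivAt 0 hin
    have hproj : HasDerivAt (fun s : ℂ => (G (0, u₀ + s • x)).2 j) ((L (0, x)).2 j) 0 :=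
      ((ContinuousLinearMap.proj j).comp
        (ContinuousLinearMap.snd ℂ ℂ (Fin N → ℂ))).hasFDerivAt.comp_hasDerivAt 0 hcomp
    have heq : (fun s : ℂ => (G (0, u₀ + s • x)).2 j)
        = fun s : ℂ => (u₀ j + s * x j) ^ M * c - K := by
      funext s
      rw [hGdef]
      simp only [Ytil_zero']
      simp [hc, hK]
    rw [heq] at hproj
    have hd : HasDerivAt (fun s : ℂ => (u₀ j + s * x j) ^ M * c - K)
        ((↑M * (u₀ j + 0 * x j) ^ (M - 1) * (1 * x j)) * c) 0 :=
      ((((hasDerivAt_id (0:ℂ)).mul_const (x j)).const_add (u₀ j)).pow M).mul_const c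
        |>.sub_const K
    have := hproj.unique hd
    rw [this]; ring
  have hinj : Function.Injective L := by
    refine (injective_iff_map_eq_zero L).2 ?_
    intro p hp
    have h1 : p.1 = 0 := by
      have := hL1 p; rw [hp] at this; exact this.symm
    have h2 : p.2 = 0 := by
      funext j
      have hp' : L (0, p.2) = 0 := by
        rw [show ((0:ℂ), p.2) = p from Prod.ext h1.symm rfl, hp]
      have h5 := hL2 p.2 j
      rw [hp'] at h5
      have h0 : (0:ℂ) = (↑M * u₀ j ^ (M - 1) * p.2 j) * c := h5
      have h6 := (mul_eq_zero.1 h0.symm).resolve_right hc0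
      exact (mul_eq_zero.1 h6).resolve_left
        (mul_ne_zero hM0 (pow_ne_zero _ (hu₀ j)))
    exact Prod.ext h1 (by exact h2)
  have hbij : Function.Bijective L := ⟨hinj, LinearMap.injective_iff_surjective.1 hinj⟩
  set e : (ℂ × (Fin N → ℂ)) ≃L[ℂ] (ℂ × (Fin N → ℂ)) :=
    LinearEquiv.toContinuousLinearEquiv
      (LinearEquiv.ofBijective (L : (ℂ × (Fin N → ℂ)) →ₗ[ℂ] (ℂ × (Fin N → ℂ))) hbij) with hedef
  have he : (e : (ℂ × (Fin N → ℂ)) →L[ℂ] (ℂ × (Fin N → ℂ))) = L :=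
    ContinuousLinearMap.ext fun p => rfl
  have hf' : HasFDerivAt G (e : (ℂ × (Fin N → ℂ)) →L[ℂ] (ℂ × (Fin N → ℂ))) (0, u₀) := by
    rw [he]; exact hGf
  -- the local inverse
  have hCA : ContDiffAt ℂ 1 G (0, u₀) := hGc.contDiffAt
  have hstrict : HasStrictFDerivAt G
      (e : (ℂ × (Fin N → ℂ)) →L[ℂ] (ℂ × (Fin N → ℂ))) (0, u₀) :=
    hCA.hasStrictFDerivAt' hf' one_ne_zero
  set h : ℂ × (Fin N → ℂ) → ℂ × (Fin N → ℂ) := hstrict.localInverse G e (0, u₀) with hhdef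
  have hsm : ContDiffAt ℂ 1 h (G (0, u₀)) := hCA.to_localInverse hf' one_ne_zero
  rw [hGa] at hsm
  obtain ⟨U, hU, hUdiff⟩ := hsm.contDiffOn le_rfl (by simp)
  have hUd : DifferentiableOn ℂ h U := hUdiff.differentiableOn one_ne_zero
  have hri : ∀ᶠ y in nhds (G (0, u₀)), G (h y) = y := hstrict.eventually_right_inverse
  rw [hGa] at hri
  have hι : Filter.Tendsto (fun θ : ℂ => ((θ, 0) : ℂ × (Fin N → ℂ))) (nhds 0)
      (nhds ((0 : ℂ), (0 : Fin N → ℂ))) :=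
    (continuous_id.prodMk continuous_const).tendsto 0
  have hUe : ∀ᶠ y in nhds ((0 : ℂ), (0 : Fin N → ℂ)), y ∈ U := hU
  have hball0 : ∀ᶠ θ in nhds (0 : ℂ),
      ((θ, 0) : ℂ × (Fin N → ℂ)) ∈ U ∧ G (h (θ, 0)) = (θ, 0) :=
    hι.eventually (hUe.and hri)
  rw [Metric.eventually_nhds_iff_ball] at hball0
  obtain ⟨ε, hε, hball⟩ := hball0
  refine ⟨ε, hε, fun j θ => (h (θ, 0)).2 j, ?_, ?_, ?_, ?_⟩
  · -- holomorphy
    intro j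
    have hh : DifferentiableOn ℂ (fun θ : ℂ => h (θ, 0)) (Metric.ball 0 ε) := by
      refine hUd.comp ?_ (fun θ hθ => (hball θ hθ).1)
      exact (differentiable_id.prodMk (differentiable_const _)).differentiableOn
    exact ((ContinuousLinearMap.proj j).comp
      (ContinuousLinearMap.snd ℂ ℂ (Fin N → ℂ))).differentiable.comp_differentiableOn hh
  · -- the Bethe equations hold
    intro θ hθ j
    have hg := (hball θ hθ).2
    rw [hGdef] at hg
    have h1 : (h (θ, 0)).1 = θ := congrArg Prod.fst hg
    have h2 : Ytil M N q (h (θ, 0)).1 (h (θ, 0)).2 j = 0 := congrFun (congrArg Prod.snd hg) j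
    rw [h1] at h2
    exact h2
  · -- initial values
    intro j
    have hval : h (G (0, u₀)) = (0, u₀) := hstrict.localInverse_apply_image
    rw [hGa] at hval
    show (h ((0:ℂ), (0 : Fin N → ℂ))).2 j = _
    rw [hval]
  · -- uniqueness
    intro v s hs hvcont hveq hv0
    have hv0' : v 0 = u₀ := funext fun j => hv0 j
    set Φ : OpenPartialHomeomorph (ℂ × (Fin N → ℂ)) (ℂ × (Fin N → ℂ)) :=
      hstrict.toOpenPartialHomeomorph G with hΦdef
    have hsrc : Φ.source ∈ nhds ((0:ℂ), u₀) :=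
      Φ.open_source.mem_nhds hstrict.mem_toOpenPartialHomeomorph_source
    have hVc : Filter.Tendsto (fun θ : ℂ => ((θ, v θ) : ℂ × (Fin N → ℂ))) (nhds 0)
        (nhds ((0:ℂ), u₀)) := by
      have : ContinuousAt (fun θ : ℂ => ((θ, v θ) : ℂ × (Fin N → ℂ))) 0 :=
        continuousAt_id.prodMk (hvcont.continuousAt hs)
      simpa [ContinuousAt, hv0'] using this
    have E1 : ∀ᶠ θ in nhds (0:ℂ), ((θ, v θ) : ℂ × (Fin N → ℂ)) ∈ Φ.source :=
      hVc.eventually hsrc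
    have hh0 : h ((0:ℂ), (0 : Fin N → ℂ)) = (0, u₀) := by
      have := hstrict.localInverse_apply_image (f := G) (f' := e) (a := (0, u₀))
      rw [hGa] at this; exact this
    have hhc : Filter.Tendsto h (nhds ((0:ℂ), (0 : Fin N → ℂ))) (nhds ((0:ℂ), u₀)) := by
      have hcc := hstrict.localInverse_continuousAt (f := G) (f' := e) (a := (0, u₀))
      rw [hGa] at hcc
      have hc2 : ContinuousAt h ((0:ℂ), (0 : Fin N → ℂ)) := hcc
      unfold ContinuousAt at hc2
      rwa [hh0] at hc2
    have E3 : ∀ᶠ θ in nhds (0:ℂ), h ((θ, 0) : ℂ × (Fin N → ℂ)) ∈ Φ.source :=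
      (hhc.comp hι).eventually hsrc
    have E4 : ∀ᶠ θ in nhds (0:ℂ), G (h ((θ, 0) : ℂ × (Fin N → ℂ))) = (θ, 0) :=
      hι.eventually hri
    filter_upwards [E1, E3, E4, hs] with θ h1 h3 h4 h5
    have hGv : G (θ, v θ) = ((θ, 0) : ℂ × (Fin N → ℂ)) := by
      rw [hGdef]; exact Prod.ext rfl (funext fun j => hveq θ h5 j)
    have hkey : ((θ, v θ) : ℂ × (Fin N → ℂ)) = h (θ, 0) := by
      refine Φ.injOn h1 h3 ?_
      show G (θ, v θ) = G (h (θ, 0))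
      rw [hGv, h4]
    intro j
    exact congrFun (congrArg Prod.snd hkey) j


end
end

section
/- Free-fermion reduction of the twisted Bethe system. Let q = i (so q² = −1) and let x_1,…,x_N ∈ ℂ satisfy x_j + x_a ≠ 0 for all a ≠ j. Then (x_1,…,x_N) satisfies the system Ŷ_κ(x_j|x) = 0 for all j = 1,…,N if and only if (x_j + i)^M = κ·e^{iπ(N−1−M/2)}·(x_j − i)^M for every j = 1,…,N. -/
open Complex Matrix Finset

noncomputable section

/-- The twisted Bethe system in multiplicative variables. -/
def Yhat (M N : ℕ) (q κ : ℂ) (x : Fin N → ℂ) (j : Fin N) : ℂ :=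
  (x j - q⁻¹) ^ M * ∏ a ∈ Finset.univ.erase j, (x j - q ^ 2 * x a)
    - κ * q ^ (2 * (N : ℤ) - 2 - (M : ℤ)) * (x j - q) ^ M *
        ∏ a ∈ Finset.univ.erase j, (x j - q ^ (-2 : ℤ) * x a)

/-- Admissibility in multiplicative variables: `x_j ≠ q` and `x_k ≠ q² x_j` for `k ≠ j`. -/
def AdmX {N : ℕ} (q : ℂ) (x : Fin N → ℂ) : Prop :=
  ∀ j, x j ≠ q ∧ ∀ k, k ≠ j → x k ≠ q ^ 2 * x j

/-- Free-fermion (`q = i`) reduction of the twisted Bethe system. -/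
theorem free_fermion_reduction
    (M : ℕ) (hM : 2 ≤ M) (hMe : Even M) (N : ℕ) (hN : 1 ≤ N) (hNM : N ≤ M) (κ : ℂ)
    (x : Fin N → ℂ) (hx : ∀ j a, a ≠ j → x j + x a ≠ 0) :
    (∀ j, Yhat M N Complex.I κ x j = 0) ↔
      ∀ j, (x j + Complex.I) ^ M =
        κ * Complex.exp (Complex.I * (Real.pi : ℂ) * ((N : ℂ) - 1 - (M : ℂ) / 2)) *
          (x j - Complex.I) ^ M := by

  have hI : Complex.I = Complex.exp ((Real.pi : ℂ)/2 * Complex.I) := by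
    have h : ((Real.pi : ℂ)/2) = ((Real.pi/2 : ℝ) : ℂ) := by push_cast; ring
    rw [h, Complex.exp_mul_I]
    simp
  have hpow : Complex.I ^ (2*(N:ℤ)-2-(M:ℤ)) =
      Complex.exp (Complex.I * (Real.pi : ℂ) * ((N:ℂ) - 1 - (M:ℂ)/2)) := by
    have h := Complex.exp_int_mul ((Real.pi : ℂ)/2 * Complex.I) (2*(N:ℤ)-2-(M:ℤ))
    rw [← hI] at h
    rw [← h]
    congr 1
    push_cast
    ring
  have key : ∀ j, Yhat M N Complex.I κ x j =
      (∏ a ∈ Finset.univ.erase j, (x j + x a)) *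
        ((x j + Complex.I) ^ M -
          κ * Complex.exp (Complex.I * (Real.pi : ℂ) * ((N:ℂ) - 1 - (M:ℂ)/2)) *
          (x j - Complex.I) ^ M) := by
    intro j
    unfold Yhat
    rw [hpow, Complex.inv_I]
    have h2 : ∏ a ∈ Finset.univ.erase j, (x j - Complex.I ^ 2 * x a)
        = ∏ a ∈ Finset.univ.erase j, (x j + x a) := by
      refine Finset.prod_congr rfl fun a _ => ?_
      rw [Complex.I_sq]; ring
    have hm2 : ∏ a ∈ Finset.univ.erase j, (x j - Complex.I ^ (-2:ℤ) * x a)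
        = ∏ a ∈ Finset.univ.erase j, (x j + x a) := by
      refine Finset.prod_congr rfl fun a _ => ?_
      have hI2 : Complex.I ^ (-2:ℤ) = -1 := by
        rw [_root_.zpow_neg, show (2:ℤ) = ((2:ℕ):ℤ) from rfl, zpow_natCast]
        norm_num [Complex.I_sq]
      rw [hI2]; ring
    rw [h2, hm2]
    ring
  have hP : ∀ j, (∏ a ∈ Finset.univ.erase j, (x j + x a)) ≠ 0 := fun j =>
    Finset.prod_ne_zero_iff.mpr fun a ha => hx j a (Finset.ne_of_mem_erase ha)
  constructor
  · intro h j
    have hj := h j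
    rw [key j, mul_eq_zero] at hj
    rcases hj with h' | h'
    · exact absurd h' (hP j)
    · exact sub_eq_zero.mp h'
  · intro h j
    rw [key j, h j]
    ring

end
end

section
/- Inversion of the twisted transfer matrix at η/2. For every κ ∈ ℂ, T_κ(η/2) ∘ T_κ(−η/2) = κ·a(η/2)·d(−η/2)·Id_H = κ·sinh^{2M}(η)·Id_H (using that M is even). In particular, for κ ≠ 0 the operator T_κ(η/2) is invertible with T_κ(η/2)^{−1} = (κ·a(η/2)·d(−η/2))^{−1}·T_κ(−η/2). -/
open Complex Matrix Finset

noncomputable section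

namespace TTMI
variable {M : ℕ}

def flp : Fin 2 → Fin 2 := fun i => if i = 0 then 1 else 0

@[simp] lemma flp_zero : flp 0 = 1 := rfl
@[simp] lemma flp_one : flp 1 = 0 := rfl

lemma siteOp_apply (n : Fin M) (A : Matrix (Fin 2) (Fin 2) ℂ) (f : QS M) (s : Conf M) :
    siteOp n A f s = ∑ j : Fin 2, A (s n) j * f (Function.update s n j) := rfl

lemma Lmat_half (η : ℂ) (n : Fin M) (a b : Fin 2) (f : QS M) (s : Conf M) :
    Lmat M η (η/2) n a b f s
      = Complex.sinh η * (if s n = b then 1 else 0) * f (Function.update s n a) := by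
  have h1 : η/2 + η/2 = η := by ring
  have h2 : η/2 - η/2 = (0:ℂ) := by ring
  have hsn : s n = 0 ∨ s n = 1 := by omega
  fin_cases a <;> fin_cases b <;> rcases hsn with h | h <;>
    simp [Lmat, siteOp_apply, h, h1, h2, Fin.sum_univ_two, pauliM, pauliP]

lemma Lmat_mhalf (η : ℂ) (n : Fin M) (a b : Fin 2) (f : QS M) (s : Conf M) :
    Lmat M η (-(η/2)) n a b f s
      = Complex.sinh η * (if a = b then -1 else 1) * (if s n = flp a then 1 else 0)
          * f (Function.update s n (flp b)) := by
  have h1 : -(η/2) + η/2 = (0:ℂ) := by ring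
  have h2 : -(η/2) - η/2 = -η := by ring
  have hsn : s n = 0 ∨ s n = 1 := by omega
  fin_cases a <;> fin_cases b <;> rcases hsn with h | h <;>
    simp [Lmat, siteOp_apply, h, h1, h2, Fin.sum_univ_two, pauliM, pauliP, flp]

def Pm (M : ℕ) (η lam : ℂ) : ℕ → Matrix (Fin 2) (Fin 2) (Module.End ℂ (QS M))
  | 0 => 1
  | k+1 => (if h : k < M then Lmat M η lam ⟨k, h⟩ else 1) * Pm M η lam k

lemma Tmon_eq_Pm (M : ℕ) (η lam : ℂ) : Tmon M η lam = Pm M η lam M := by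
  suffices h : ∀ k (hk : k ≤ M),
      ((List.ofFn fun i : Fin k => Lmat M η lam (Fin.castLE hk i)).reverse).prod
        = Pm M η lam k by
    have := h M le_rfl
    simpa [Tmon] using this
  intro k
  induction k with
  | zero => intro hk; simp [Pm]
  | succ k ih =>
    intro hk
    have hk' : k ≤ M := by omega
    rw [List.ofFn_succ']
    simp only [List.concat_eq_append, List.reverse_append, List.reverse_cons,
      List.reverse_nil, List.nil_append, List.singleton_append, List.prod_cons]
    have hcast : (fun i : Fin k => Lmat M η lam (Fin.castLE hk i.castSucc))
        = fun i : Fin k => Lmat M η lam (Fin.castLE hk' i) := by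
      funext i; rfl
    rw [hcast, ih hk']
    have : Fin.castLE hk (Fin.last k) = ⟨k, by omega⟩ := by ext; simp
    rw [this]
    simp [Pm, dif_pos (show k < M by omega)]

def insTop (k : ℕ) (a : Fin 2) (s : Conf M) : Conf M := fun n =>
  if h : (n : ℕ) + 1 < k ∧ (n : ℕ) + 1 < M then s ⟨(n:ℕ)+1, h.2⟩
  else if (n : ℕ) + 1 = k then a else s n

def insBot (k : ℕ) (v : Fin 2) (s : Conf M) : Conf M := fun n =>
  if (n : ℕ) = 0 then v
  else if (n : ℕ) < k then s ⟨(n:ℕ)-1, lt_of_le_of_lt (Nat.sub_le _ _) n.isLt⟩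
  else s n

lemma insTop_succ (k : ℕ) (hkM : k < M) (a : Fin 2) (s : Conf M) :
    insTop k (s ⟨k, hkM⟩) (Function.update s ⟨k, hkM⟩ a) = insTop (k+1) a s := by
  funext n
  unfold insTop
  rcases lt_trichotomy ((n : ℕ) + 1) k with hn | hn | hn
  · rw [dif_pos ⟨hn, by omega⟩, dif_pos ⟨by omega, by omega⟩]
    rw [Function.update_of_ne (by simp [Fin.ext_iff]; omega)]
  · rw [dif_neg (by omega), if_pos hn, dif_pos ⟨by omega, by omega⟩]
    congr 1; ext; simp [hn]
  · rw [dif_neg (by omega), if_neg (by omega), dif_neg (by omega)]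
    by_cases hn2 : (n : ℕ) + 1 = k + 1
    · rw [if_pos hn2, Function.update_apply, if_pos (by ext; simp; omega)]
    · rw [if_neg hn2, Function.update_of_ne (by simp [Fin.ext_iff]; omega)]

lemma insBot_succ (k : ℕ) (hk1 : 1 ≤ k) (hkM : k < M) (v : Fin 2) (s : Conf M) :
    insBot k v (Function.update s ⟨k, hkM⟩ (s ⟨k-1, by omega⟩)) = insBot (k+1) v s := by
  funext n
  unfold insBot
  by_cases h0 : (n : ℕ) = 0
  · rw [if_pos h0, if_pos h0]
  rw [if_neg h0, if_neg h0]
  rcases lt_trichotomy ((n : ℕ)) k with hn | hn | hn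
  · rw [if_pos hn, if_pos (by omega)]
    rw [Function.update_of_ne (by simp [Fin.ext_iff]; omega)]
  · rw [if_neg (by omega), if_pos (by omega), Function.update_apply,
      if_pos (by ext; simp [hn])]
    congr 1; ext; simp; omega
  · rw [if_neg (by omega), if_neg (by omega),
      Function.update_of_ne (by simp [Fin.ext_iff]; omega)]

lemma Pm_half (η : ℂ) (hM : 0 < M) :
    ∀ k, 1 ≤ k → k ≤ M → ∀ (a b : Fin 2) (f : QS M) (s : Conf M),
      Pm M η (η/2) k a b f s
        = Complex.sinh η ^ k * (if s ⟨0, hM⟩ = b then 1 else 0) * f (insTop k a s) := by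
  intro k hk1
  induction k, hk1 using Nat.le_induction with
  | base =>
    intro hkM a b f s
    have hPm : Pm M η (η/2) 1 = Lmat M η (η/2) ⟨0, hM⟩ * 1 := by
      simp [Pm, dif_pos hM]
    rw [hPm, mul_one, Lmat_half]
    have hupd : Function.update s ⟨0, hM⟩ a = insTop 1 a s := by
      funext n
      unfold insTop
      rw [dif_neg (by omega), Function.update_apply]
      by_cases hn : (n:ℕ) = 0
      · rw [if_pos (by ext; simpa using hn), if_pos (by omega)]
      · rw [if_neg (by simp [Fin.ext_iff]; omega), if_neg (by omega)]
    rw [hupd, pow_one]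
  | succ k hk IH =>
    intro hkM a b f s
    have hkM' : k < M := by omega
    have hPm : Pm M η (η/2) (k+1) = Lmat M η (η/2) ⟨k, hkM'⟩ * Pm M η (η/2) k := by
      simp [Pm, dif_pos hkM']
    rw [hPm, Matrix.mul_apply, Fin.sum_univ_two]
    simp only [LinearMap.add_apply, Pi.add_apply, Module.End.mul_apply]
    rw [Lmat_half, Lmat_half]
    rw [IH (by omega) 0 b f _, IH (by omega) 1 b f _]
    rw [Function.update_of_ne (Fin.ne_of_val_ne (show (0:ℕ) ≠ k by omega))]
    have hins := insTop_succ k hkM' a s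
    have hsk : s ⟨k, hkM'⟩ = 0 ∨ s ⟨k, hkM'⟩ = 1 := by omega
    rcases hsk with h | h <;> rw [h] at hins <;> rw [← hins] <;>
      (try simp [h]) <;> (try split_ifs) <;> try ring1

lemma Pm_mhalf (η : ℂ) (hM : 0 < M) :
    ∀ k, 1 ≤ k → k ≤ M → ∀ (j : Fin M), (j : ℕ) = k - 1 →
      ∀ (a b : Fin 2) (f : QS M) (s : Conf M),
      Pm M η (-(η/2)) k a b f s
        = Complex.sinh η ^ k * (-1)^k * (if a = b then 1 else -1)
            * (if s j = flp a then 1 else 0) * f (insBot k (flp b) s) := by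
  intro k hk1
  induction k, hk1 using Nat.le_induction with
  | base =>
    intro hkM j hj a b f s
    have hj' : j = ⟨0, hM⟩ := by ext; simp; omega
    subst hj'
    have hPm : Pm M η (-(η/2)) 1 = Lmat M η (-(η/2)) ⟨0, hM⟩ * 1 := by
      simp [Pm, dif_pos hM]
    rw [hPm, mul_one, Lmat_mhalf]
    have hupd : Function.update s ⟨0, hM⟩ (flp b) = insBot 1 (flp b) s := by
      funext n
      unfold insBot
      rw [Function.update_apply]
      by_cases hn : (n:ℕ) = 0
      · rw [if_pos (by ext; simpa using hn), if_pos hn]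
      · rw [if_neg (by simp [Fin.ext_iff]; omega), if_neg hn, if_neg (by omega)]
    rw [hupd]
    by_cases hab : a = b <;> simp [hab] <;> ring
  | succ k hk IH =>
    intro hkM j hj a b f s
    have hkM' : k < M := by omega
    have hj' : j = ⟨k, hkM'⟩ := by ext; simp; omega
    subst hj'
    have hPm : Pm M η (-(η/2)) (k+1)
        = Lmat M η (-(η/2)) ⟨k, hkM'⟩ * Pm M η (-(η/2)) k := by
      simp [Pm, dif_pos hkM']
    rw [hPm, Matrix.mul_apply, Fin.sum_univ_two]
    simp only [LinearMap.add_apply, Pi.add_apply, Module.End.mul_apply]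
    rw [Lmat_mhalf, Lmat_mhalf]
    have hjk : ((⟨k-1, by omega⟩ : Fin M) : ℕ) = k - 1 := rfl
    rw [IH (by omega) ⟨k-1, by omega⟩ hjk 0 b f _,
       IH (by omega) ⟨k-1, by omega⟩ hjk 1 b f _]
    have hne : (⟨k-1, by omega⟩ : Fin M) ≠ ⟨k, hkM'⟩ :=
      Fin.ne_of_val_ne (show k-1 ≠ k by omega)
    rw [Function.update_of_ne hne, Function.update_of_ne hne]
    have hins := insBot_succ k hk hkM' (flp b) s
    have hsk : s ⟨k-1, by omega⟩ = 0 ∨ s ⟨k-1, by omega⟩ = 1 := by omega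
    rcases hsk with h | h <;> rw [h] at hins <;> rw [← hins] <;>
      fin_cases a <;> fin_cases b <;> (try simp [h]) <;> (try split_ifs) <;> try ring1

end TTMI
/-- Inversion of the twisted transfer matrix at `η/2`. -/
theorem twisted_transfer_matrix_inversion
    (M : ℕ) (hM : 2 ≤ M) (hMe : Even M) (η : ℂ) (hη : Complex.sinh η ≠ 0) (κ : ℂ) :
    Tk M η κ (η/2) * Tk M η κ (-(η/2)) = (κ * af M η (η/2) * df M η (-(η/2))) • 1
    ∧ Tk M η κ (η/2) * Tk M η κ (-(η/2)) = (κ * Complex.sinh η ^ (2 * M)) • 1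
    ∧ (κ ≠ 0 → IsUnit (Tk M η κ (η/2)) ∧
        Ring.inverse (Tk M η κ (η/2)) =
          (κ * af M η (η/2) * df M η (-(η/2)))⁻¹ • Tk M η κ (-(η/2))) := by
  have hM0 : 0 < M := by omega
  have haf : af M η (η/2) = Complex.sinh η ^ M := by
    unfold af; rw [show η/2 + η/2 = η by ring]
  have hdf : df M η (-(η/2)) = Complex.sinh η ^ M := by
    unfold df
    rw [show -(η/2) - η/2 = -η by ring, Complex.sinh_neg, hMe.neg_pow]
  have hpow : Complex.sinh η ^ (2*M) = Complex.sinh η ^ M * Complex.sinh η ^ M := by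
    rw [two_mul, pow_add]
  -- closed form for the twisted transfer matrix at η/2
  have hA : ∀ (g : QS M) (t : Conf M), Tk M η κ (η/2) g t
      = Complex.sinh η ^ M * ((if t ⟨0, hM0⟩ = 0 then 1 else 0) * g (TTMI.insTop M 0 t)
          + κ * (if t ⟨0, hM0⟩ = 1 then 1 else 0) * g (TTMI.insTop M 1 t)) := by
    intro g t
    have h00 := TTMI.Pm_half (M := M) η hM0 M (by omega) le_rfl 0 0 g t
    have h11 := TTMI.Pm_half (M := M) η hM0 M (by omega) le_rfl 1 1 g t
    simp only [Tk, Aop, Dop, TTMI.Tmon_eq_Pm, LinearMap.add_apply, Pi.add_apply,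
      LinearMap.smul_apply, Pi.smul_apply, smul_eq_mul]
    rw [h00, h11]; ring
  have hlt : M - 1 < M := by omega
  -- closed form at −η/2
  have hD : ∀ (g : QS M) (t : Conf M), Tk M η κ (-(η/2)) g t
      = Complex.sinh η ^ M * ((if t ⟨M-1, hlt⟩ = 1 then 1 else 0) * g (TTMI.insBot M 1 t)
          + κ * (if t ⟨M-1, hlt⟩ = 0 then 1 else 0) * g (TTMI.insBot M 0 t)) := by
    intro g t
    have hj : ((⟨M-1, hlt⟩ : Fin M) : ℕ) = M - 1 := rfl
    have h00 := TTMI.Pm_mhalf (M := M) η hM0 M (by omega) le_rfl ⟨M-1, hlt⟩ hj 0 0 g t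
    have h11 := TTMI.Pm_mhalf (M := M) η hM0 M (by omega) le_rfl ⟨M-1, hlt⟩ hj 1 1 g t
    simp only [Tk, Aop, Dop, TTMI.Tmon_eq_Pm, LinearMap.add_apply, Pi.add_apply,
      LinearMap.smul_apply, Pi.smul_apply, smul_eq_mul]
    rw [h00, h11, hMe.neg_one_pow]
    simp only [TTMI.flp_zero, TTMI.flp_one]
    norm_num
    rcases (show t ⟨M-1, hlt⟩ = 0 ∨ t ⟨M-1, hlt⟩ = 1 by omega) with h | h <;> simp [h] <;> ring
  have e1 : ∀ (a : Fin 2) (s : Conf M), TTMI.insTop M a s ⟨M-1, hlt⟩ = a := by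
    intro a s
    unfold TTMI.insTop
    rw [dif_neg (show ¬((M-1)+1 < M ∧ (M-1)+1 < M) by omega),
      if_pos (show (M-1)+1 = M by omega)]
  have e2 : ∀ (v a : Fin 2) (s : Conf M),
      TTMI.insBot M v (TTMI.insTop M a s) = Function.update s ⟨0, hM0⟩ v := by
    intro v a s
    funext n
    unfold TTMI.insBot TTMI.insTop
    by_cases h0 : (n:ℕ) = 0
    · rw [if_pos h0, Function.update_apply, if_pos (by ext; simpa using h0)]
    · rw [if_neg h0, if_pos n.isLt,
        dif_pos ⟨show (n:ℕ)-1+1 < M by omega, show (n:ℕ)-1+1 < M by omega⟩,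
        Function.update_of_ne (Fin.ne_of_val_ne (show (n:ℕ) ≠ 0 by omega))]
      congr 1
      exact Fin.ext (show (n:ℕ)-1+1 = (n:ℕ) by omega)
  -- the key operator identity
  have key : Tk M η κ (η/2) * Tk M η κ (-(η/2))
      = (κ * (Complex.sinh η ^ M * Complex.sinh η ^ M)) • 1 := by
    apply LinearMap.ext; intro f; funext s
    rw [Module.End.mul_apply, hA]
    rw [hD f (TTMI.insTop M 0 s), hD f (TTMI.insTop M 1 s)]
    rw [e1 0 s, e1 1 s, e2 1 0 s, e2 0 0 s, e2 1 1 s, e2 0 1 s]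
    have hs0 : s ⟨0, hM0⟩ = 0 ∨ s ⟨0, hM0⟩ = 1 := by omega
    simp only [LinearMap.smul_apply, Module.End.one_apply, Pi.smul_apply, smul_eq_mul]
    rcases hs0 with h | h
    · have hupd : Function.update s ⟨0, hM0⟩ 0 = s := by
        rw [← h]; exact Function.update_eq_self _ _
      simp [h, hupd]; ring
    · have hupd : Function.update s ⟨0, hM0⟩ 1 = s := by
        rw [← h]; exact Function.update_eq_self _ _
      simp [h, hupd]; ring
  refine ⟨?_, ?_, ?_⟩
  · rw [key, haf, hdf, mul_assoc]
  · rw [key, hpow]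
  · intro hκ
    set c := κ * af M η (η/2) * df M η (-(η/2)) with hcdef
    have hc : c = κ * (Complex.sinh η ^ M * Complex.sinh η ^ M) := by
      rw [hcdef, haf, hdf, mul_assoc]
    have hcne : c ≠ 0 := by
      rw [hc]
      exact mul_ne_zero hκ (mul_ne_zero (pow_ne_zero _ hη) (pow_ne_zero _ hη))
    have hSb : Tk M η κ (η/2) * (c⁻¹ • Tk M η κ (-(η/2))) = 1 := by
      rw [mul_smul_comm, key, ← hc, smul_smul, inv_mul_cancel₀ hcne, one_smul]
    have hsurj : Function.Surjective (Tk M η κ (η/2)) := by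
      intro y
      refine ⟨(c⁻¹ • Tk M η κ (-(η/2))) y, ?_⟩
      have := congrArg (fun T : Module.End ℂ (QS M) => T y) hSb
      simpa [Module.End.mul_apply] using this
    have hinj : Function.Injective (Tk M η κ (η/2)) :=
      (LinearMap.injective_iff_surjective).mpr hsurj
    have hu : IsUnit (Tk M η κ (η/2)) := (Module.End.isUnit_iff _).mpr ⟨hinj, hsurj⟩
    refine ⟨hu, ?_⟩
    have hstep : Ring.inverse (Tk M η κ (η/2))
        * (Tk M η κ (η/2) * (c⁻¹ • Tk M η κ (-(η/2))))
        = Ring.inverse (Tk M η κ (η/2)) := by rw [hSb, mul_one]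
    rw [← hstep, ← mul_assoc, Ring.inverse_mul_cancel _ hu, one_mul]

end
end

section
/- Solution of the quantum inverse scattering problem. The operator T(η/2) = A(η/2) + D(η/2) is invertible, and for every site j = 1,…,M: σ^x_j = T(η/2)^{j−1} ∘ (B(η/2) + C(η/2)) ∘ T(η/2)^{−j}, σ^y_j = T(η/2)^{j−1} ∘ i(B(η/2) − C(η/2)) ∘ T(η/2)^{−j}, and σ^z_j = T(η/2)^{j−1} ∘ (A(η/2) − D(η/2)) ∘ T(η/2)^{−j}. -/
open Complex Matrix Finset

noncomputable section

section AuxQISP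
variable (M : ℕ) [NeZero M]

lemma fin2cases (v : Fin 2) : v = 0 ∨ v = 1 := by
  obtain ⟨x, hx⟩ := v
  interval_cases x
  · left; rfl
  · right; rfl

def shiftC : Conf M → Conf M := fun s n => s (n + 1)
def shiftCInv : Conf M → Conf M := fun s n => s (n - 1)
def Ush : Module.End ℂ (QS M) := LinearMap.funLeft ℂ ℂ (shiftC M)
def Vsh : Module.End ℂ (QS M) := LinearMap.funLeft ℂ ℂ (shiftCInv M)

lemma Ush_apply (f : QS M) (s : Conf M) : Ush M f s = f (shiftC M s) := rfl
lemma Vsh_apply (f : QS M) (s : Conf M) : Vsh M f s = f (shiftCInv M s) := rfl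

omit [NeZero M] in
lemma siteOp_apply (n : Fin M) (A : Matrix (Fin 2) (Fin 2) ℂ) (f : QS M) (s : Conf M) :
    siteOp n A f s = ∑ j : Fin 2, A (s n) j * f (Function.update s n j) := rfl

lemma Ush_mul_Vsh : Ush M * Vsh M = 1 := by
  refine LinearMap.ext fun f => funext fun s => ?_
  show f (shiftCInv M (shiftC M s)) = f s
  congr 1
  funext n
  show s (n - 1 + 1) = s n
  rw [sub_add_cancel]

lemma Vsh_mul_Ush : Vsh M * Ush M = 1 := by
  refine LinearMap.ext fun f => funext fun s => ?_
  show f (shiftC M (shiftCInv M s)) = f s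
  congr 1
  funext n
  show s (n + 1 - 1) = s n
  rw [add_sub_cancel_right]

lemma Ush_comm (n : Fin M) (A : Matrix (Fin 2) (Fin 2) ℂ) :
    Ush M * siteOp n A = siteOp (n + 1) A * Ush M := by
  refine LinearMap.ext fun f => funext fun s => ?_
  show siteOp n A f (shiftC M s) = siteOp (n+1) A (Ush M f) s
  rw [siteOp_apply, siteOp_apply]
  refine Finset.sum_congr rfl fun j _ => ?_
  have h1 : (shiftC M s) n = s (n + 1) := rfl
  rw [h1]
  congr 1
  show f _ = f _
  congr 1
  funext k
  simp only [Function.update_apply, shiftC]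
  by_cases hk : k = n
  · simp [hk]
  · rw [if_neg hk, if_neg (fun h => hk (add_right_cancel h))]

open Fin.NatCast in
lemma Ush_conj (k : ℕ) (n : Fin M) (A : Matrix (Fin 2) (Fin 2) ℂ) :
    (Ush M)^k * siteOp n A * (Vsh M)^k = siteOp (n + (k : Fin M)) A := by
  induction k generalizing n with
  | zero => simp
  | succ k ih =>
      have key : Ush M * siteOp n A * Vsh M = siteOp (n+1) A := by
        rw [Ush_comm, mul_assoc, Ush_mul_Vsh, mul_one]
      have h2 : (Ush M)^(k+1) * siteOp n A * (Vsh M)^(k+1)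
          = (Ush M)^k * (Ush M * siteOp n A * Vsh M) * (Vsh M)^k := by
        rw [pow_succ, pow_succ']
        simp only [mul_assoc]
      rw [h2, key, ih]
      congr 1
      push_cast
      abel

end AuxQISP

section Aux2
variable (M : ℕ) [NeZero M]

/-- the configuration obtained from `s` by shifting sites `1,…,m-1` down by one,
placing `a` at site `m-1`, and keeping the rest. -/
def shf (m : ℕ) (a : Fin 2) (s : Conf M) : Conf M := fun n =>
  if hn : (n : ℕ) + 1 < m ∧ (n : ℕ) + 1 < M then s ⟨(n : ℕ) + 1, hn.2⟩
  else if (n : ℕ) + 1 = m then a else s n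

def Rop (m : ℕ) (a b : Fin 2) : Module.End ℂ (QS M) where
  toFun f := fun s => if s 0 = b then f (shf M m a s) else 0
  map_add' f g := by funext s; by_cases h : s 0 = b <;> simp [h]
  map_smul' c f := by funext s; by_cases h : s 0 = b <;> simp [h]

lemma Rop_apply (m : ℕ) (a b : Fin 2) (f : QS M) (s : Conf M) :
    Rop M m a b f s = if s 0 = b then f (shf M m a s) else 0 := rfl

lemma shf_one (a : Fin 2) (s : Conf M) :
    shf M 1 a s = Function.update s 0 a := by
  funext n
  have h0 : (n = (0 : Fin M)) ↔ ((n : ℕ) = 0) := by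
    rw [Fin.ext_iff, Fin.val_zero]
  simp only [shf, Function.update_apply]
  split_ifs with h1 h2 h3 h4 <;> first
    | rfl
    | (exfalso; omega)
    | (exfalso; rw [h0] at *; omega)

lemma shf_step (m : ℕ) (h1 : 1 ≤ m) (hmM : m < M) (a : Fin 2) (s : Conf M) :
    shf M m (s ⟨m, hmM⟩) (Function.update s ⟨m, hmM⟩ a) = shf M (m+1) a s := by
  funext n
  have hne : ∀ (k : ℕ) (hk : k < M), ((⟨k, hk⟩ : Fin M) = ⟨m, hmM⟩) ↔ k = m := by
    intro k hk; simp [Fin.ext_iff]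
  simp only [shf, Function.update_apply]
  rcases Nat.lt_trichotomy ((n : ℕ) + 1) m with hc | hc | hc
  · have hM : (n : ℕ) + 1 < M := by omega
    rw [dif_pos ⟨hc, hM⟩, dif_pos ⟨by omega, hM⟩, if_neg (by rw [hne]; omega)]
  · have hM : (n : ℕ) + 1 < M := by omega
    rw [dif_neg (by omega), if_pos hc, dif_pos ⟨by omega, hM⟩]
    congr 1
    exact Fin.ext (by simp [hc])
  · rw [dif_neg (by omega), dif_neg (by omega), if_neg (by omega)]
    by_cases hc2 : (n : ℕ) + 1 = m + 1
    · rw [if_pos hc2, if_pos (by rw [Fin.ext_iff]; simpa using (by omega : (n:ℕ) = m))]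
    · rw [if_neg hc2, if_neg (by rw [Fin.ext_iff]; simpa using (by omega : ¬ (n:ℕ) = m))]

lemma val_neg_one (hM2 : 2 ≤ M) : ((-1 : Fin M) : ℕ) = M - 1 := by
  rw [Fin.coe_neg, Fin.val_one', Nat.mod_eq_of_lt (by omega : 1 < M)]
  exact Nat.mod_eq_of_lt (by omega)

lemma shf_M (hM2 : 2 ≤ M) (a : Fin 2) (s : Conf M) :
    shf M M a s = Function.update (shiftC M s) (-1 : Fin M) a := by
  funext n
  have hvn := val_neg_one M hM2
  have hnlt := n.isLt
  simp only [shf, Function.update_apply, shiftC]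
  by_cases hc : (n : ℕ) + 1 < M
  · rw [dif_pos ⟨hc, hc⟩, if_neg (by rw [Fin.ext_iff, hvn]; omega)]
    congr 1
    have h1 : ((1 : Fin M) : ℕ) = 1 := by
      rw [Fin.val_one']; exact Nat.mod_eq_of_lt (by omega)
    rw [Fin.ext_iff, Fin.val_add, h1]
    exact (Nat.mod_eq_of_lt hc).symm
  · rw [dif_neg (by omega), if_pos (by omega), if_pos (by rw [Fin.ext_iff, hvn]; omega)]

end Aux2

section AuxQISP3
variable (M : ℕ) [NeZero M]

lemma Lmat_eta (η : ℂ) (n : Fin M) : Lmat M η (η/2) n =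
    !![siteOp n !![Complex.sinh η, 0; 0, 0], Complex.sinh η • siteOp n pauliM;
       Complex.sinh η • siteOp n pauliP, siteOp n !![0, 0; 0, Complex.sinh η]] := by
  unfold Lmat
  rw [show η/2 + η/2 = η from by ring, show η/2 - η/2 = 0 from by ring, Complex.sinh_zero]

lemma base_case (η : ℂ) (h0 : 0 < M) :
    Lmat M η (η/2) ⟨0, h0⟩ = Matrix.of fun a b => Complex.sinh η • Rop M 1 a b := by
  have hz : (⟨0, h0⟩ : Fin M) = 0 := Fin.ext (by simp)
  rw [Lmat_eta, hz]
  refine Matrix.ext fun a b => ?_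
  rw [Matrix.of_apply]
  refine LinearMap.ext fun f => ?_
  funext s
  rcases fin2cases a with rfl | rfl <;> rcases fin2cases b with rfl | rfl <;>
    rcases fin2cases (s 0) with h | h <;>
    simp [siteOp_apply, Rop_apply, Fin.sum_univ_two, shf_one, h, pauliM, pauliP]

lemma step_case (η : ℂ) (m : ℕ) (h1 : 1 ≤ m) (hmM : m < M) :
    Lmat M η (η/2) ⟨m, hmM⟩ * (Matrix.of fun a b => (Complex.sinh η)^m • Rop M m a b)
      = Matrix.of fun a b => (Complex.sinh η)^(m+1) • Rop M (m+1) a b := by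
  have hne : (0 : Fin M) ≠ ⟨m, hmM⟩ := by
    rw [Fin.ne_iff_vne]
    simp only [Fin.val_zero]
    omega
  rw [Lmat_eta]
  refine Matrix.ext fun a b => ?_
  rw [Matrix.mul_apply, Fin.sum_univ_two]
  refine LinearMap.ext fun f => ?_
  funext s
  have hupd : ∀ j : Fin 2, (Function.update s ⟨m, hmM⟩ j) 0 = s 0 :=
    fun j => Function.update_of_ne hne _ _
  rcases fin2cases a with rfl | rfl <;> rcases fin2cases (s ⟨m, hmM⟩) with h | h
  · simp only [Matrix.of_apply, Matrix.cons_val', Matrix.cons_val_zero, Matrix.cons_val_one,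
      Matrix.head_cons, Matrix.head_fin_const, Matrix.empty_val', Matrix.cons_val_fin_one,
      LinearMap.add_apply, Pi.add_apply, Module.End.mul_apply, LinearMap.smul_apply,
      Pi.smul_apply, smul_eq_mul, siteOp_apply, Fin.sum_univ_two, Rop_apply, hupd, h,
      pauliM, zero_mul, mul_zero, add_zero, zero_add]
    rw [← shf_step M m h1 hmM 0 s, h]
    split_ifs <;> ring
  · simp only [Matrix.of_apply, Matrix.cons_val', Matrix.cons_val_zero, Matrix.cons_val_one,
      Matrix.head_cons, Matrix.head_fin_const, Matrix.empty_val', Matrix.cons_val_fin_one,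
      LinearMap.add_apply, Pi.add_apply, Module.End.mul_apply, LinearMap.smul_apply,
      Pi.smul_apply, smul_eq_mul, siteOp_apply, Fin.sum_univ_two, Rop_apply, hupd, h,
      pauliM, zero_mul, mul_zero, add_zero, zero_add]
    rw [← shf_step M m h1 hmM 0 s, h]
    split_ifs <;> ring
  · simp only [Matrix.of_apply, Matrix.cons_val', Matrix.cons_val_zero, Matrix.cons_val_one,
      Matrix.head_cons, Matrix.head_fin_const, Matrix.empty_val', Matrix.cons_val_fin_one,
      LinearMap.add_apply, Pi.add_apply, Module.End.mul_apply, LinearMap.smul_apply,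
      Pi.smul_apply, smul_eq_mul, siteOp_apply, Fin.sum_univ_two, Rop_apply, hupd, h,
      pauliP, zero_mul, mul_zero, add_zero, zero_add]
    rw [← shf_step M m h1 hmM 1 s, h]
    split_ifs <;> ring
  · simp only [Matrix.of_apply, Matrix.cons_val', Matrix.cons_val_zero, Matrix.cons_val_one,
      Matrix.head_cons, Matrix.head_fin_const, Matrix.empty_val', Matrix.cons_val_fin_one,
      LinearMap.add_apply, Pi.add_apply, Module.End.mul_apply, LinearMap.smul_apply,
      Pi.smul_apply, smul_eq_mul, siteOp_apply, Fin.sum_univ_two, Rop_apply, hupd, h,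
      pauliP, zero_mul, mul_zero, add_zero, zero_add]
    rw [← shf_step M m h1 hmM 1 s, h]
    split_ifs <;> ring

lemma take_prod (hM2 : 2 ≤ M) (η : ℂ) (m : ℕ) (h1 : 1 ≤ m) (hmM : m ≤ M) :
    (((List.ofFn fun n : Fin M => Lmat M η (η/2) n).take m).reverse).prod
      = Matrix.of fun a b => (Complex.sinh η)^m • Rop M m a b := by
  induction m with
  | zero => omega
  | succ m ih =>
    have hgetm : (List.ofFn fun n : Fin M => Lmat M η (η/2) n)[m]?
        = some (Lmat M η (η/2) ⟨m, by omega⟩) := by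
      rw [List.getElem?_ofFn]
      simp only [List.ofFnNthVal, dif_pos (show m < M by omega)]
    rw [List.take_succ, hgetm, Option.toList_some, List.reverse_append,
      List.reverse_singleton, List.singleton_append, List.prod_cons]
    by_cases hm0 : m = 0
    · subst hm0
      rw [List.take_zero, List.reverse_nil, List.prod_nil, mul_one, base_case M η, pow_one]
    · rw [ih (by omega) (by omega), step_case M η m (by omega) (by omega)]

lemma combo_T (hM2 : 2 ≤ M) : Rop M M 0 0 + Rop M M 1 1 = Ush M := by
  refine LinearMap.ext fun f => funext fun s => ?_
  simp only [LinearMap.add_apply, Pi.add_apply, Rop_apply, shf_M M hM2, Ush_apply]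
  have hg : shiftC M s (-1 : Fin M) = s 0 := by
    show s (-1 + 1) = s 0; rw [neg_add_cancel]
  have hu : Function.update (shiftC M s) (-1 : Fin M) (s 0) = shiftC M s := by
    rw [← hg]; exact Function.update_eq_self _ _
  rcases fin2cases (s 0) with h | h <;> rw [h] at hu <;> simp [h, hu]

lemma combo_X (hM2 : 2 ≤ M) :
    Rop M M 0 1 + Rop M M 1 0 = Ush M * siteOp (-1 : Fin M) pauliX := by
  refine LinearMap.ext fun f => funext fun s => ?_
  have hg : shiftC M s (-1 : Fin M) = s 0 := by
    show s (-1 + 1) = s 0; rw [neg_add_cancel]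
  simp only [LinearMap.add_apply, Pi.add_apply, Rop_apply, shf_M M hM2, Module.End.mul_apply,
    Ush_apply, siteOp_apply, Fin.sum_univ_two, hg]
  rcases fin2cases (s 0) with h | h <;> simp [h, pauliX]

lemma combo_Y (hM2 : 2 ≤ M) :
    Complex.I • (Rop M M 0 1 - Rop M M 1 0) = Ush M * siteOp (-1 : Fin M) pauliY := by
  refine LinearMap.ext fun f => funext fun s => ?_
  have hg : shiftC M s (-1 : Fin M) = s 0 := by
    show s (-1 + 1) = s 0; rw [neg_add_cancel]
  simp only [LinearMap.smul_apply, LinearMap.sub_apply, Pi.smul_apply, Pi.sub_apply,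
    smul_eq_mul, Rop_apply, shf_M M hM2, Module.End.mul_apply,
    Ush_apply, siteOp_apply, Fin.sum_univ_two, hg]
  rcases fin2cases (s 0) with h | h <;> simp [h, pauliY] <;> ring

lemma combo_Z (hM2 : 2 ≤ M) :
    Rop M M 0 0 - Rop M M 1 1 = Ush M * siteOp (-1 : Fin M) pauliZ := by
  refine LinearMap.ext fun f => funext fun s => ?_
  have hg : shiftC M s (-1 : Fin M) = s 0 := by
    show s (-1 + 1) = s 0; rw [neg_add_cancel]
  simp only [LinearMap.sub_apply, Pi.sub_apply, Rop_apply, shf_M M hM2, Module.End.mul_apply,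
    Ush_apply, siteOp_apply, Fin.sum_univ_two, hg]
  rcases fin2cases (s 0) with h | h <;> simp [h, pauliZ]

end AuxQISP3

/-- Solution of the quantum inverse scattering problem. -/
theorem quantum_inverse_scattering_problem
    (M : ℕ) (hM : 2 ≤ M) (hMe : Even M) (η : ℂ) (hη : Complex.sinh η ≠ 0) :
    IsUnit (Ttm M η (η/2))
    ∧ ∀ j : Fin M,
        siteOp j pauliX = (Ttm M η (η/2)) ^ (j : ℕ) * (Bop M η (η/2) + Cop M η (η/2)) *
            (Ring.inverse (Ttm M η (η/2))) ^ ((j : ℕ) + 1)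
        ∧ siteOp j pauliY = (Ttm M η (η/2)) ^ (j : ℕ) *
            (Complex.I • (Bop M η (η/2) - Cop M η (η/2))) *
            (Ring.inverse (Ttm M η (η/2))) ^ ((j : ℕ) + 1)
        ∧ siteOp j pauliZ = (Ttm M η (η/2)) ^ (j : ℕ) * (Aop M η (η/2) - Dop M η (η/2)) *
            (Ring.inverse (Ttm M η (η/2))) ^ ((j : ℕ) + 1) := by
  haveI : NeZero M := ⟨by omega⟩
  have hTmon : Tmon M η (η/2)
      = Matrix.of fun a b => (Complex.sinh η)^M • Rop M M a b := by
    have hlen : (List.ofFn fun n : Fin M => Lmat M η (η/2) n).length ≤ M :=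
      le_of_eq List.length_ofFn
    have h := take_prod M hM η M (by omega) le_rfl
    rwa [List.take_of_length_le hlen] at h
  set c : ℂ := (Complex.sinh η)^M with hc_def
  have hc : c ≠ 0 := pow_ne_zero _ hη
  have hA : Aop M η (η/2) = c • Rop M M 0 0 := by
    show Tmon M η (η/2) 0 0 = _; rw [hTmon]; rfl
  have hB : Bop M η (η/2) = c • Rop M M 0 1 := by
    show Tmon M η (η/2) 0 1 = _; rw [hTmon]; rfl
  have hC : Cop M η (η/2) = c • Rop M M 1 0 := by
    show Tmon M η (η/2) 1 0 = _; rw [hTmon]; rfl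
  have hD : Dop M η (η/2) = c • Rop M M 1 1 := by
    show Tmon M η (η/2) 1 1 = _; rw [hTmon]; rfl
  have hT : Ttm M η (η/2) = c • Ush M := by
    show Aop M η (η/2) + (1:ℂ) • Dop M η (η/2) = _
    rw [one_smul, hA, hD, ← smul_add, combo_T M hM]
  have hUV := Ush_mul_Vsh M
  have hVU := Vsh_mul_Ush M
  have hmul1 : (c • Ush M) * (c⁻¹ • Vsh M) = 1 := by
    rw [smul_mul_smul_comm, hUV, mul_inv_cancel₀ hc, one_smul]
  have hmul2 : (c⁻¹ • Vsh M) * (c • Ush M) = 1 := by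
    rw [smul_mul_smul_comm, hVU, inv_mul_cancel₀ hc, one_smul]
  let u : (Module.End ℂ (QS M))ˣ := ⟨c • Ush M, c⁻¹ • Vsh M, hmul1, hmul2⟩
  have hinv : Ring.inverse (Ttm M η (η/2)) = c⁻¹ • Vsh M := by
    rw [hT]
    exact Ring.inverse_unit u
  refine ⟨by rw [hT]; exact ⟨u, rfl⟩, fun j => ?_⟩
  have key : ∀ A : Matrix (Fin 2) (Fin 2) ℂ,
      (Ttm M η (η/2)) ^ (j : ℕ) * (c • (Ush M * siteOp (-1 : Fin M) A))
        * (Ring.inverse (Ttm M η (η/2))) ^ ((j : ℕ) + 1) = siteOp j A := by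
    intro A
    rw [hinv, hT, smul_pow, smul_pow, smul_mul_smul_comm, smul_mul_smul_comm]
    have hop : (Ush M) ^ (j : ℕ) * (Ush M * siteOp (-1 : Fin M) A) * (Vsh M) ^ ((j : ℕ) + 1)
        = siteOp j A := by
      have h2 : (Ush M) ^ (j : ℕ) * (Ush M * siteOp (-1 : Fin M) A)
          = (Ush M) ^ ((j : ℕ) + 1) * siteOp (-1 : Fin M) A := by
        rw [pow_succ, mul_assoc]
      rw [h2, mul_assoc, ← mul_assoc, Ush_conj]
      congr 1
      open Fin.NatCast in rw [Nat.cast_add, Nat.cast_one, Fin.cast_val_eq_self]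
      abel
    rw [hop]
    have hsc : c ^ (j : ℕ) * c * (c⁻¹) ^ ((j : ℕ) + 1) = 1 := by
      rw [← pow_succ, inv_pow, mul_inv_cancel₀ (pow_ne_zero _ hc)]
    rw [hsc, one_smul]
  refine ⟨?_, ?_, ?_⟩
  · rw [hB, hC, ← smul_add, combo_X M hM]
    exact (key pauliX).symm
  · rw [hB, hC,
      show c • Rop M M 0 1 - c • Rop M M 1 0 = c • (Rop M M 0 1 - Rop M M 1 0) from
        (smul_sub c _ _).symm,
      smul_comm Complex.I c, combo_Y M hM]
    exact (key pauliY).symm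
  · rw [hA, hD,
      show c • Rop M M 0 0 - c • Rop M M 1 1 = c • (Rop M M 0 0 - Rop M M 1 1) from
        (smul_sub c _ _).symm,
      combo_Z M hM]
    exact (key pauliZ).symm

end
end

section
/- Trotter limit of the eigenvalue ratios (equation (4.11) of the paper). Fix κ ∈ ℂ with κ ≠ 0, t ∈ ℝ, integers m ≥ 0 and N ≥ 1, and complex numbers z_1,…,z_N, λ_1,…,λ_N with sinh(z_b + η/2) ≠ 0, sinh(z_b − η/2) ≠ 0, sinh(λ_b + η/2) ≠ 0, sinh(λ_b − η/2) ≠ 0 for all b. For L ∈ ℕ set ε_L = (2it sinh η)/L. Then lim_{L→∞} { ∏_{b=1}^N [ ( sinh(z_b+η/2−ε_L)·sinh(λ_b−η/2−ε_L) / (sinh(z_b−η/2−ε_L)·sinh(λ_b+η/2−ε_L)) )^{L} · ( sinh(z_b−η/2)·sinh(λ_b+η/2) / (sinh(z_b+η/2)·sinh(λ_b−η/2)) )^{L−m} ] · [ 1 + (sinh^M ε_L / sinh^M(η+ε_L)) · ∏_{b=1}^N sinh(λ_b − 3η/2 − ε_L)/sinh(λ_b + η/2 − ε_L) ]^{−L}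 · [ 1 + κ·(sinh^M ε_L / sinh^M(η+ε_L)) · ∏_{b=1}^N sinh(z_b − 3η/2 − ε_L)/sinh(z_b + η/2 − ε_L) ]^{L} } = ∏_{b=1}^N e^{it(E(z_b) − E(λ_b))} · ( sinh(z_b+η/2)·sinh(λ_b−η/2) / (sinh(z_b−η/2)·sinh(λ_b+η/2)) )^{m}. -/
open Complex Matrix Finset

noncomputable section

open Filter


lemma cdivL_tendsto (c : ℂ) : Tendsto (fun L : ℕ => c / (L:ℂ)) atTop (nhds 0) := by
  have h : Tendsto (fun L : ℕ => ((L:ℝ))⁻¹) atTop (nhds 0) :=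
    tendsto_inv_atTop_nhds_zero_nat
  have h2 : Tendsto (fun L : ℕ => ((L:ℂ))⁻¹) atTop (nhds 0) := by
    have := (Complex.continuous_ofReal.tendsto 0).comp h
    simp only [Function.comp_def] at this
    simpa using this
  simpa using ((tendsto_const_nhds (x := c)).mul h2).congr (fun L => (div_eq_mul_inv c _).symm)

lemma slope_ext {g : ℂ → ℂ} {d : ℂ} (h : HasDerivAt g d 0) :
    Tendsto (fun w => if w = 0 then d else (g w - g 0) / w) (nhds 0) (nhds d) := by
  have hs := hasDerivAt_iff_tendsto_slope.mp h
  rw [← nhdsNE_sup_pure (0:ℂ), Filter.tendsto_sup]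
  constructor
  · refine hs.congr' ?_
    filter_upwards [self_mem_nhdsWithin] with w hw
    simp only [Set.mem_compl_iff, Set.mem_singleton_iff] at hw
    simp [slope_def_field, hw, div_eq_iff hw]
  · simpa using (tendsto_pure_pure (fun w => if w = 0 then d else (g w - g 0) / w) (0:ℂ)).mono_right (pure_le_nhds _)

lemma Lmul_tendsto {g : ℂ → ℂ} {d : ℂ} (h : HasDerivAt g d 0) (c : ℂ) :
    Tendsto (fun L : ℕ => (L:ℂ) * (g (c / L) - g 0)) atTop (nhds (c * d)) := by
  have hc := ((slope_ext h).comp (cdivL_tendsto c)).const_mul c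
  refine hc.congr' ?_
  filter_upwards [eventually_ge_atTop 1] with L hL
  have hL0 : (L:ℂ) ≠ 0 := Nat.cast_ne_zero.mpr (by omega)
  by_cases hc0 : c = 0
  · simp [hc0, Function.comp]
  · have hcl : c / (L:ℂ) ≠ 0 := div_ne_zero hc0 hL0
    simp only [Function.comp, if_neg hcl]
    field_simp

lemma pow_tendsto_exp {b : ℕ → ℂ} {a : ℂ}
    (h : Tendsto (fun L : ℕ => (L:ℂ) * (b L - 1)) atTop (nhds a)) :
    Tendsto (fun L : ℕ => b L ^ L) atTop (nhds (Complex.exp a)) := by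
  have hinv : Tendsto (fun L : ℕ => ((L:ℂ))⁻¹) atTop (nhds 0) := by
    simpa using cdivL_tendsto 1
  have hb1 : Tendsto b atTop (nhds 1) := by
    have := (hinv.mul h)
    rw [zero_mul] at this
    have h2 : Tendsto (fun L : ℕ => b L - 1) atTop (nhds 0) := by
      refine this.congr' ?_
      filter_upwards [eventually_ge_atTop 1] with L hL
      have hL0 : (L:ℂ) ≠ 0 := Nat.cast_ne_zero.mpr (by omega)
      field_simp
    simpa using h2.add_const 1
  have hlog1 : HasDerivAt (fun w : ℂ => Complex.log (1 + w)) 1 0 := by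
    have h1 : HasDerivAt (fun w : ℂ => 1 + w) 1 0 := by
      simpa using (hasDerivAt_id (0:ℂ)).const_add 1
    have h2 := (Complex.hasDerivAt_log (by simp : (1:ℂ) + 0 ∈ Complex.slitPlane)).comp 0 h1
    simpa [Function.comp_def] using h2
  have hψ : Tendsto (fun w : ℂ => if w = 0 then 1 else Complex.log (1 + w) / w)
      (nhds 0) (nhds 1) := by
    have := slope_ext hlog1
    simpa [Complex.log_one] using this
  have hb0 : Tendsto (fun L => b L - 1) atTop (nhds 0) := by
    simpa using hb1.sub_const 1
  have hψb : Tendsto (fun L => if b L - 1 = 0 then 1 else Complex.log (1 + (b L - 1)) / (b L - 1))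
      atTop (nhds 1) := hψ.comp hb0
  have hkey : Tendsto (fun L : ℕ => (L:ℂ) * Complex.log (b L)) atTop (nhds a) := by
    have := h.mul hψb
    rw [mul_one] at this
    refine this.congr (fun L => ?_)
    by_cases hb : b L = 1
    · simp [hb]
    · have hb' : b L - 1 ≠ 0 := sub_ne_zero.mpr hb
      rw [if_neg hb']
      have : (1 : ℂ) + (b L - 1) = b L := by ring
      rw [this]
      field_simp
  have hexp := (Complex.continuous_exp.tendsto a).comp hkey
  refine hexp.congr' ?_
  have : ∀ᶠ L : ℕ in atTop, ‖b L - 1‖ < 1 := by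
    have := hb0.norm
    simpa using this.eventually (eventually_lt_nhds (by simp : ‖(0:ℂ)‖ < 1))
  filter_upwards [this] with L hL
  have hbne : b L ≠ 0 := by
    intro h0
    rw [h0] at hL
    simp at hL
  simp only [Function.comp]
  rw [Complex.exp_nat_mul, Complex.exp_log hbne]

lemma sinh_ratio (x c : ℂ) (hx : Complex.sinh x ≠ 0) :
    Tendsto (fun L : ℕ => (Complex.sinh (x - c / L) / Complex.sinh x) ^ L) atTop
      (nhds (Complex.exp (-(c * Complex.cosh x / Complex.sinh x)))) := by
  have hg : HasDerivAt (fun w : ℂ => Complex.sinh (x - w) / Complex.sinh x)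
      (Complex.cosh (x - 0) * (0 - 1) / Complex.sinh x) 0 := by
    have h1 : HasDerivAt (fun w : ℂ => x - w) (0 - 1) 0 :=
      (hasDerivAt_const 0 x).sub (hasDerivAt_id 0)
    exact ((Complex.hasDerivAt_sinh (x - 0)).comp 0 h1).div_const _
  have := pow_tendsto_exp (b := fun L : ℕ => Complex.sinh (x - c / L) / Complex.sinh x)
    (a := c * (Complex.cosh (x - 0) * (0 - 1) / Complex.sinh x)) ?_
  · convert this using 2
    simp
    ring
  · have := Lmul_tendsto hg c
    simpa [div_self hx] using this

lemma key_alg (NL DL N0 D0 : ℂ) (hNL : NL ≠ 0) (hDL : DL ≠ 0) (hN0 : N0 ≠ 0) (hD0 : D0 ≠ 0)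
    (L m : ℕ) :
    (NL / DL) ^ (L:ℤ) * (D0 / N0) ^ ((L:ℤ) - (m:ℤ)) =
      (NL / N0) ^ L * ((DL / D0) ^ L)⁻¹ * (N0 / D0) ^ m := by
  have hq : D0 / N0 ≠ 0 := div_ne_zero hD0 hN0
  rw [zpow_sub₀ hq, zpow_natCast, zpow_natCast, zpow_natCast]
  rw [div_pow, div_pow, div_pow, div_pow, div_pow, div_pow]
  field_simp

lemma sinh_ev (x c : ℂ) (hx : Complex.sinh x ≠ 0) :
    ∀ᶠ L : ℕ in atTop, Complex.sinh (x - c / L) ≠ 0 := by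
  have h : Tendsto (fun L : ℕ => Complex.sinh (x - c / L)) atTop (nhds (Complex.sinh x)) := by
    have h0 : Tendsto (fun L : ℕ => x - c / L) atTop (nhds x) := by
      simpa using (tendsto_const_nhds (x := x)).sub (cdivL_tendsto c)
    exact (Complex.continuous_sinh.tendsto x).comp h0
  exact h.eventually_ne hx

lemma main_factor (c : ℂ) (m : ℕ) (zb lb η : ℂ)
    (hz1 : Complex.sinh (zb + η/2) ≠ 0) (hz2 : Complex.sinh (zb - η/2) ≠ 0)
    (hl1 : Complex.sinh (lb + η/2) ≠ 0) (hl2 : Complex.sinh (lb - η/2) ≠ 0) :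
    Tendsto (fun L : ℕ =>
      ((Complex.sinh (zb + η/2 - c / L) * Complex.sinh (lb - η/2 - c / L)) /
        (Complex.sinh (zb - η/2 - c / L) * Complex.sinh (lb + η/2 - c / L))) ^ (L:ℤ) *
      ((Complex.sinh (zb - η/2) * Complex.sinh (lb + η/2)) /
        (Complex.sinh (zb + η/2) * Complex.sinh (lb - η/2))) ^ ((L:ℤ) - (m:ℤ))) atTop
      (nhds (Complex.exp (c * (Complex.cosh (zb - η/2) / Complex.sinh (zb - η/2)
          - Complex.cosh (zb + η/2) / Complex.sinh (zb + η/2)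
          + Complex.cosh (lb + η/2) / Complex.sinh (lb + η/2)
          - Complex.cosh (lb - η/2) / Complex.sinh (lb - η/2))) *
        ((Complex.sinh (zb + η/2) * Complex.sinh (lb - η/2)) /
          (Complex.sinh (zb - η/2) * Complex.sinh (lb + η/2))) ^ m)) := by
  have t1 := sinh_ratio (zb + η/2) c hz1
  have t2 := sinh_ratio (lb - η/2) c hl2
  have t3 := (sinh_ratio (zb - η/2) c hz2).inv₀ (Complex.exp_ne_zero _)
  have t4 := (sinh_ratio (lb + η/2) c hl1).inv₀ (Complex.exp_ne_zero _)
  have T := (((t1.mul t2).mul (t3.mul t4)).mul_const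
    (((Complex.sinh (zb + η/2) * Complex.sinh (lb - η/2)) /
      (Complex.sinh (zb - η/2) * Complex.sinh (lb + η/2))) ^ m))
  have hval : Complex.exp (-(c * Complex.cosh (zb + η/2) / Complex.sinh (zb + η/2))) *
      Complex.exp (-(c * Complex.cosh (lb - η/2) / Complex.sinh (lb - η/2))) *
      ((Complex.exp (-(c * Complex.cosh (zb - η/2) / Complex.sinh (zb - η/2))))⁻¹ *
       (Complex.exp (-(c * Complex.cosh (lb + η/2) / Complex.sinh (lb + η/2))))⁻¹) *
      ((Complex.sinh (zb + η/2) * Complex.sinh (lb - η/2)) /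
        (Complex.sinh (zb - η/2) * Complex.sinh (lb + η/2))) ^ m =
      Complex.exp (c * (Complex.cosh (zb - η/2) / Complex.sinh (zb - η/2)
          - Complex.cosh (zb + η/2) / Complex.sinh (zb + η/2)
          + Complex.cosh (lb + η/2) / Complex.sinh (lb + η/2)
          - Complex.cosh (lb - η/2) / Complex.sinh (lb - η/2))) *
        ((Complex.sinh (zb + η/2) * Complex.sinh (lb - η/2)) /
          (Complex.sinh (zb - η/2) * Complex.sinh (lb + η/2))) ^ m := by
    rw [← Complex.exp_neg, ← Complex.exp_neg, ← Complex.exp_add, ← Complex.exp_add,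
      ← Complex.exp_add]
    congr 2
    ring
  rw [hval] at T
  refine T.congr' ?_
  filter_upwards [sinh_ev (zb + η/2) c hz1, sinh_ev (lb - η/2) c hl2,
    sinh_ev (zb - η/2) c hz2, sinh_ev (lb + η/2) c hl1] with L h1 h2 h3 h4
  have key := key_alg (Complex.sinh (zb + η/2 - c / L) * Complex.sinh (lb - η/2 - c / L))
    (Complex.sinh (zb - η/2 - c / L) * Complex.sinh (lb + η/2 - c / L))
    (Complex.sinh (zb + η/2) * Complex.sinh (lb - η/2))
    (Complex.sinh (zb - η/2) * Complex.sinh (lb + η/2))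
    (mul_ne_zero h1 h2) (mul_ne_zero h3 h4) (mul_ne_zero hz1 hl2) (mul_ne_zero hz2 hl1) L m
  rw [key, ← div_mul_div_comm (Complex.sinh (zb + η/2 - c / L)), ← div_mul_div_comm (Complex.sinh (zb - η/2 - c / L)), mul_pow, mul_pow, mul_inv]

lemma one_plus_tendsto (η c κ : ℂ) (hη : Complex.sinh η ≠ 0) (M : ℕ) (hM : 2 ≤ M)
    {N : ℕ} (w : Fin N → ℂ) (hw : ∀ b, Complex.sinh (w b + η/2) ≠ 0) :
    Tendsto (fun L : ℕ =>
      (1 + κ * (Complex.sinh (c / L) ^ M / Complex.sinh (η + c / L) ^ M) *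
        ∏ b, Complex.sinh (w b - 3 * η / 2 - c / L) /
          Complex.sinh (w b + η/2 - c / L)) ^ L) atTop (nhds 1) := by
  have hPi : Tendsto (fun L : ℕ => ∏ b, Complex.sinh (w b - 3 * η / 2 - c / L) /
      Complex.sinh (w b + η/2 - c / L)) atTop
      (nhds (∏ b, Complex.sinh (w b - 3 * η / 2) / Complex.sinh (w b + η/2))) := by
    refine tendsto_finset_prod _ (fun b _ => ?_)
    have hnum : Tendsto (fun L : ℕ => Complex.sinh (w b - 3 * η / 2 - c / L)) atTop
        (nhds (Complex.sinh (w b - 3 * η / 2))) := by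
      refine (Complex.continuous_sinh.tendsto _).comp ?_
      simpa using (tendsto_const_nhds (x := w b - 3 * η / 2)).sub (cdivL_tendsto c)
    have hden : Tendsto (fun L : ℕ => Complex.sinh (w b + η/2 - c / L)) atTop
        (nhds (Complex.sinh (w b + η/2))) := by
      refine (Complex.continuous_sinh.tendsto _).comp ?_
      simpa using (tendsto_const_nhds (x := w b + η/2)).sub (cdivL_tendsto c)
    exact hnum.div hden (hw b)
  have hA : Tendsto (fun L : ℕ => (L:ℂ) * Complex.sinh (c / L)) atTop (nhds c) := by
    have := Lmul_tendsto (Complex.hasDerivAt_sinh 0) c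
    simpa using this
  have hs0 : Tendsto (fun L : ℕ => Complex.sinh (c / L)) atTop (nhds 0) := by
    have := (Complex.continuous_sinh.tendsto 0).comp (cdivL_tendsto c)
    simpa [Function.comp_def] using this
  have hB : Tendsto (fun L : ℕ => Complex.sinh (c / L) ^ (M - 1)) atTop (nhds 0) := by
    have := hs0.pow (M - 1)
    rwa [zero_pow (by omega : M - 1 ≠ 0)] at this
  have hC : Tendsto (fun L : ℕ => (Complex.sinh (η + c / L) ^ M)⁻¹) atTop
      (nhds ((Complex.sinh η ^ M)⁻¹)) := by
    refine Tendsto.inv₀ ?_ (pow_ne_zero M hη)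
    refine Tendsto.pow ?_ M
    refine (Complex.continuous_sinh.tendsto _).comp ?_
    simpa using (tendsto_const_nhds (x := η)).add (cdivL_tendsto c)
  have hzero : Tendsto (fun L : ℕ =>
      (L:ℂ) * (κ * (Complex.sinh (c / L) ^ M / Complex.sinh (η + c / L) ^ M) *
        ∏ b, Complex.sinh (w b - 3 * η / 2 - c / L) /
          Complex.sinh (w b + η/2 - c / L))) atTop (nhds 0) := by
    have hT := ((((hA.mul hB).mul hC).mul hPi).const_mul κ)
    rw [show κ * (c * 0 * (Complex.sinh η ^ M)⁻¹ *
        (∏ b, Complex.sinh (w b - 3 * η / 2) / Complex.sinh (w b + η/2))) = 0 by ring] at hT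
    refine hT.congr (fun L => ?_)
    have hMsplit : Complex.sinh (c / L) ^ M =
        Complex.sinh (c / L) * Complex.sinh (c / L) ^ (M - 1) := by
      conv_lhs => rw [show M = 1 + (M - 1) by omega]
      rw [pow_add, pow_one]
    rw [hMsplit]
    ring
  have := pow_tendsto_exp (b := fun L : ℕ =>
      1 + κ * (Complex.sinh (c / L) ^ M / Complex.sinh (η + c / L) ^ M) *
        ∏ b, Complex.sinh (w b - 3 * η / 2 - c / L) /
          Complex.sinh (w b + η/2 - c / L)) (a := 0) (by simpa using hzero)
  simpa using this

lemma coth_diff (η x : ℂ) (h1 : Complex.sinh (x + η/2) ≠ 0)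
    (h2 : Complex.sinh (x - η/2) ≠ 0) :
    Complex.cosh (x - η/2) / Complex.sinh (x - η/2)
      - Complex.cosh (x + η/2) / Complex.sinh (x + η/2)
      = Complex.sinh η / (Complex.sinh (x - η/2) * Complex.sinh (x + η/2)) := by
  have hs : Complex.sinh (x + η/2) * Complex.cosh (x - η/2)
      - Complex.cosh (x + η/2) * Complex.sinh (x - η/2) = Complex.sinh η := by
    have h := Complex.sinh_sub (x + η/2) (x - η/2)
    rw [show (x + η/2) - (x - η/2) = η by ring] at h
    linear_combination -h
  rw [div_sub_div _ _ h2 h1]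
  congr 1
  linear_combination hs

lemma exp_arg_eq (η : ℂ) (t : ℝ) (zb lb : ℂ)
    (hz1 : Complex.sinh (zb + η/2) ≠ 0) (hz2 : Complex.sinh (zb - η/2) ≠ 0)
    (hl1 : Complex.sinh (lb + η/2) ≠ 0) (hl2 : Complex.sinh (lb - η/2) ≠ 0) :
    (2 * Complex.I * (t:ℂ) * Complex.sinh η) * (Complex.cosh (zb - η/2) / Complex.sinh (zb - η/2)
          - Complex.cosh (zb + η/2) / Complex.sinh (zb + η/2)
          + Complex.cosh (lb + η/2) / Complex.sinh (lb + η/2)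
          - Complex.cosh (lb - η/2) / Complex.sinh (lb - η/2))
      = Complex.I * (t:ℂ) * (Ebare η zb - Ebare η lb) := by
  have e1 := coth_diff η zb hz1 hz2
  have e2 := coth_diff η lb hl1 hl2
  have : Complex.cosh (zb - η/2) / Complex.sinh (zb - η/2)
          - Complex.cosh (zb + η/2) / Complex.sinh (zb + η/2)
          + Complex.cosh (lb + η/2) / Complex.sinh (lb + η/2)
          - Complex.cosh (lb - η/2) / Complex.sinh (lb - η/2)
      = Complex.sinh η / (Complex.sinh (zb - η/2) * Complex.sinh (zb + η/2))
        - Complex.sinh η / (Complex.sinh (lb - η/2) * Complex.sinh (lb + η/2)) := by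
    rw [← e1, ← e2]
    ring
  rw [this, Ebare, Ebare]
  ring


/-- Trotter limit of the eigenvalue ratios (equation (4.11)). -/
theorem trotter_limit_eigenvalue_ratios
    (M : ℕ) (hM : 2 ≤ M) (hMe : Even M) (η : ℂ) (hη : Complex.sinh η ≠ 0)
    (κ : ℂ) (hκ : κ ≠ 0) (t : ℝ) (m : ℕ) (N : ℕ) (hN : 1 ≤ N)
    (z lam : Fin N → ℂ)
    (hz1 : ∀ b, Complex.sinh (z b + η/2) ≠ 0) (hz2 : ∀ b, Complex.sinh (z b - η/2) ≠ 0)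
    (hl1 : ∀ b, Complex.sinh (lam b + η/2) ≠ 0) (hl2 : ∀ b, Complex.sinh (lam b - η/2) ≠ 0) :
    Filter.Tendsto (fun L : ℕ =>
      (∏ b, (((Complex.sinh (z b + η/2 - 2 * Complex.I * (t : ℂ) * Complex.sinh η / (L : ℂ)) *
              Complex.sinh (lam b - η/2 - 2 * Complex.I * (t : ℂ) * Complex.sinh η / (L : ℂ))) /
            (Complex.sinh (z b - η/2 - 2 * Complex.I * (t : ℂ) * Complex.sinh η / (L : ℂ)) *
              Complex.sinh (lam b + η/2 - 2 * Complex.I * (t : ℂ) * Complex.sinh η / (L : ℂ)))) ^ (L : ℤ) *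
          ((Complex.sinh (z b - η/2) * Complex.sinh (lam b + η/2)) /
            (Complex.sinh (z b + η/2) * Complex.sinh (lam b - η/2))) ^ ((L : ℤ) - (m : ℤ)))) *
      (1 + (Complex.sinh (2 * Complex.I * (t : ℂ) * Complex.sinh η / (L : ℂ)) ^ M /
            Complex.sinh (η + 2 * Complex.I * (t : ℂ) * Complex.sinh η / (L : ℂ)) ^ M) *
          ∏ b, Complex.sinh (lam b - 3 * η / 2 - 2 * Complex.I * (t : ℂ) * Complex.sinh η / (L : ℂ)) /
            Complex.sinh (lam b + η/2 - 2 * Complex.I * (t : ℂ) * Complex.sinh η / (L : ℂ))) ^ (-(L : ℤ)) *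
      (1 + κ * (Complex.sinh (2 * Complex.I * (t : ℂ) * Complex.sinh η / (L : ℂ)) ^ M /
            Complex.sinh (η + 2 * Complex.I * (t : ℂ) * Complex.sinh η / (L : ℂ)) ^ M) *
          ∏ b, Complex.sinh (z b - 3 * η / 2 - 2 * Complex.I * (t : ℂ) * Complex.sinh η / (L : ℂ)) /
            Complex.sinh (z b + η/2 - 2 * Complex.I * (t : ℂ) * Complex.sinh η / (L : ℂ))) ^ ((L : ℤ)))
      Filter.atTop
      (nhds (∏ b, Complex.exp (Complex.I * (t : ℂ) * (Ebare η (z b) - Ebare η (lam b))) *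
        ((Complex.sinh (z b + η/2) * Complex.sinh (lam b - η/2)) /
          (Complex.sinh (z b - η/2) * Complex.sinh (lam b + η/2))) ^ m)) := by
  set c : ℂ := 2 * Complex.I * (t : ℂ) * Complex.sinh η with hc
  have hProd : Tendsto (fun L : ℕ =>
      ∏ b, (((Complex.sinh (z b + η/2 - c / (L : ℂ)) *
              Complex.sinh (lam b - η/2 - c / (L : ℂ))) /
            (Complex.sinh (z b - η/2 - c / (L : ℂ)) *
              Complex.sinh (lam b + η/2 - c / (L : ℂ)))) ^ (L : ℤ) *
          ((Complex.sinh (z b - η/2) * Complex.sinh (lam b + η/2)) /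
            (Complex.sinh (z b + η/2) * Complex.sinh (lam b - η/2))) ^ ((L : ℤ) - (m : ℤ))))
      atTop (nhds (∏ b, Complex.exp (Complex.I * (t : ℂ) * (Ebare η (z b) - Ebare η (lam b))) *
        ((Complex.sinh (z b + η/2) * Complex.sinh (lam b - η/2)) /
          (Complex.sinh (z b - η/2) * Complex.sinh (lam b + η/2))) ^ m)) := by
    refine tendsto_finset_prod _ (fun b _ => ?_)
    have h := main_factor c m (z b) (lam b) η (hz1 b) (hz2 b) (hl1 b) (hl2 b)
    rwa [exp_arg_eq η t (z b) (lam b) (hz1 b) (hz2 b) (hl1 b) (hl2 b)] at h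
  have hP : Tendsto (fun L : ℕ =>
      (1 + (Complex.sinh (c / (L:ℂ)) ^ M / Complex.sinh (η + c / (L:ℂ)) ^ M) *
          ∏ b, Complex.sinh (lam b - 3 * η / 2 - c / (L:ℂ)) /
            Complex.sinh (lam b + η/2 - c / (L:ℂ))) ^ (-(L : ℤ))) atTop (nhds 1) := by
    have h := (one_plus_tendsto η c 1 hη M hM lam hl1).inv₀ one_ne_zero
    rw [inv_one] at h
    refine h.congr (fun L => ?_)
    rw [one_mul, _root_.zpow_neg, zpow_natCast]
  have hQ : Tendsto (fun L : ℕ =>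
      (1 + κ * (Complex.sinh (c / (L:ℂ)) ^ M / Complex.sinh (η + c / (L:ℂ)) ^ M) *
          ∏ b, Complex.sinh (z b - 3 * η / 2 - c / (L:ℂ)) /
            Complex.sinh (z b + η/2 - c / (L:ℂ))) ^ ((L : ℤ))) atTop (nhds 1) := by
    have h := one_plus_tendsto η c κ hη M hM z hz1
    refine h.congr (fun L => ?_)
    rw [zpow_natCast]
  have H := (hProd.mul hP).mul hQ
  rw [mul_one, mul_one] at H
  exact H

end
end

section
/- Hyperbolic Cauchy determinant identity. Let n ≥ 1 and let λ_1,…,λ_n, μ_1,…,μ_n ∈ ℂ satisfy sinh(μ_k − λ_j) ≠ 0 for all j,k. Then det_{1≤j,k≤n} ( 1/sinh(μ_k − λ_j) ) = ∏_{1≤b<a≤n} sinh(λ_a − λ_b)·sinh(μ_b − μ_a) / ∏_{a,b=1}^{n} sinh(μ_b − λ_a). -/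
open Complex Matrix Finset

noncomputable section

lemma Iio_succ_fin {n : ℕ} (a : Fin n) :
    Finset.Iio (a.succ) = insert (0 : Fin (n+1)) ((Finset.Iio a).map (Fin.succEmb n)) := by
  ext b
  induction b using Fin.cases with
  | zero => simp [Fin.succ_pos]
  | succ c => simp [Fin.succ_lt_succ_iff, Fin.succ_ne_zero, eq_comm]

lemma prod_Iio_succ {M : Type*} [CommMonoid M] {n : ℕ} (a : Fin n) (h : Fin (n+1) → M) :
    ∏ b ∈ Finset.Iio a.succ, h b = h 0 * ∏ b ∈ Finset.Iio a, h b.succ := by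
  rw [Iio_succ_fin, Finset.prod_insert (by simp [Fin.succ_ne_zero]), Finset.prod_map]
  rfl

lemma triangle_swap {M : Type*} [CommMonoid M] {n : ℕ} (g : Fin n → M) :
    ∏ a, ∏ b ∈ Finset.Iio a, g b = ∏ b, ∏ _a ∈ Finset.Ioi b, g b := by
  rw [Finset.prod_sigma', Finset.prod_sigma']
  refine Finset.prod_nbij' (fun p => ⟨p.2, p.1⟩) (fun p => ⟨p.2, p.1⟩) ?_ ?_ ?_ ?_ ?_ <;> simp

lemma pair_prod {n : ℕ} (g : Fin n → ℂ) :
    ∏ a, ∏ b ∈ Finset.Iio a, (g a * g b) = (∏ a, g a) ^ (n - 1) := by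
  have h1 : ∀ a : Fin n, ∏ b ∈ Finset.Iio a, (g a * g b)
      = g a ^ (a : ℕ) * ∏ b ∈ Finset.Iio a, g b := by
    intro a
    rw [Finset.prod_mul_distrib, Finset.prod_const, Fin.card_Iio]
  simp_rw [h1]
  rw [Finset.prod_mul_distrib, triangle_swap]
  have h2 : ∀ b : Fin n, ∏ _a ∈ Finset.Ioi b, g b = g b ^ (n - 1 - (b : ℕ)) := by
    intro b; rw [Finset.prod_const, Fin.card_Ioi]
  simp_rw [h2]
  rw [← Finset.prod_mul_distrib, ← Finset.prod_pow]
  refine Finset.prod_congr rfl fun a _ => ?_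
  rw [← pow_add]
  congr 1
  have := a.isLt
  omega

lemma cauchy_det : ∀ (n : ℕ) (x y : Fin n → ℂ), (∀ j k, y k - x j ≠ 0) →
    (Matrix.of fun j k => (y k - x j)⁻¹).det =
      (∏ a, ∏ b ∈ Finset.Iio a, ((x a - x b) * (y b - y a))) / ∏ a, ∏ b, (y b - x a) := by
  intro n
  induction n with
  | zero =>
    intro x y _
    simp [Matrix.det_fin_zero]
  | succ n ih =>
    intro x y h
    set x' : Fin n → ℂ := fun j => x j.succ with hx'
    set y' : Fin n → ℂ := fun k => y k.succ with hy'
    have h' : ∀ j k, y' k - x' j ≠ 0 := fun j k => h j.succ k.succ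
    set M1 : Matrix (Fin (n+1)) (Fin (n+1)) ℂ :=
      Matrix.of fun j k => if k = 0 then (y 0 - x j)⁻¹ else (y k - x j)⁻¹ - (y 0 - x j)⁻¹ with hM1
    set M3 : Matrix (Fin (n+1)) (Fin (n+1)) ℂ :=
      Matrix.of fun j k => if k = 0 then 1 else (y k - x j)⁻¹ with hM3
    set M4 : Matrix (Fin (n+1)) (Fin (n+1)) ℂ :=
      Matrix.of fun j k => if j = 0 then M3 0 k else M3 j k - M3 0 k with hM4
    set M6 : Matrix (Fin (n+1)) (Fin (n+1)) ℂ :=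
      Matrix.of fun j k => if k = 0 then (if j = 0 then (1:ℂ) else 0)
        else if j = 0 then 1 else (y k - x j)⁻¹ with hM6
    -- Step 1 : column operation
    have step1 : (Matrix.of fun j k => (y k - x j)⁻¹ : Matrix (Fin (n+1)) (Fin (n+1)) ℂ).det
        = M1.det := by
      rw [← Matrix.det_transpose, ← Matrix.det_transpose M1]
      refine (Matrix.det_eq_of_forall_row_eq_smul_add_const
        (fun k => if k = 0 then 0 else (-1 : ℂ)) 0 (by simp) ?_).symm
      intro i j
      by_cases hi : i = 0 <;> simp [hM1, hi] <;> ring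
    -- Step 2 : factor rows and columns
    have step2 : M1.det = (∏ j, (y 0 - x j)⁻¹)
        * ((∏ k, (if k = 0 then 1 else y 0 - y k)) * M3.det) := by
      have e : M1 = Matrix.of fun j k => (y 0 - x j)⁻¹
          * (Matrix.of (fun j k => (if k = 0 then (1:ℂ) else y 0 - y k) * M3 j k) j k) := by
        ext j k
        by_cases hk : k = 0
        · simp [hM1, hM3, hk, h j 0]
        · simp only [hM1, hM3, Matrix.of_apply, if_neg hk]
          field_simp [h j k, h j 0]
          ring_nf
      rw [e, Matrix.det_mul_column, Matrix.det_mul_row]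
    -- Step 3 : row operation
    have step3 : M3.det = M4.det := by
      refine (Matrix.det_eq_of_forall_row_eq_smul_add_const
        (fun j => if j = 0 then 0 else (-1 : ℂ)) 0 (by simp) ?_).symm
      intro i j
      by_cases hi : i = 0 <;> simp [hM4, hi] <;> ring
    -- Step 4 : factor rows and columns again
    have step4 : M4.det = (∏ j, (if j = 0 then 1 else x j - x 0))
        * ((∏ k, (if k = 0 then 1 else (y k - x 0)⁻¹)) * M6.det) := by
      have e : M4 = Matrix.of fun j k => (if j = 0 then (1:ℂ) else x j - x 0)
          * (Matrix.of (fun j k => (if k = 0 then (1:ℂ) else (y k - x 0)⁻¹) * M6 j k) j k) := by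
        ext j k
        by_cases hj : j = 0 <;> by_cases hk : k = 0
        · simp [hM4, hM3, hM6, hj, hk]
        · simp [hM4, hM3, hM6, hj, hk]
        · simp [hM4, hM3, hM6, hj, hk]
        · simp only [hM4, hM3, hM6, Matrix.of_apply, if_neg hj, if_neg hk]
          field_simp [h j k, h 0 k]
          ring_nf
      rw [e, Matrix.det_mul_column, Matrix.det_mul_row]
    -- Step 5 : expansion of the last determinant
    have step5 : M6.det = (Matrix.of fun j k => (y' k - x' j)⁻¹).det := by
      rw [Matrix.det_succ_column_zero, Fin.sum_univ_succ]
      simp [hM6, Fin.succ_ne_zero, Fin.succAbove, Matrix.submatrix]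
      rfl
    rw [step1, step2, step3, step4, step5, ih x' y' h']
    have hIio0 : Finset.Iio (0 : Fin (n+1)) = ∅ := by
      ext b; simp
    have hN : (∏ a : Fin (n+1), ∏ b ∈ Finset.Iio a, ((x a - x b) * (y b - y a)))
        = ((∏ a : Fin n, (x' a - x 0)) * ∏ a : Fin n, (y 0 - y' a)) *
          ∏ a : Fin n, ∏ b ∈ Finset.Iio a, ((x' a - x' b) * (y' b - y' a)) := by
      rw [Fin.prod_univ_succ, hIio0, Finset.prod_empty, one_mul, ← Finset.prod_mul_distrib,
        ← Finset.prod_mul_distrib]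
      refine Finset.prod_congr rfl fun a _ => ?_
      rw [prod_Iio_succ]
    have hD : (∏ a : Fin (n+1), ∏ b : Fin (n+1), (y b - x a))
        = ((y 0 - x 0) * ∏ b : Fin n, (y' b - x 0)) *
          ((∏ a : Fin n, (y 0 - x' a)) * ∏ a : Fin n, ∏ b : Fin n, (y' b - x' a)) := by
      rw [Fin.prod_univ_succ]
      congr 1
      · rw [Fin.prod_univ_succ]
      · rw [← Finset.prod_mul_distrib]
        exact Finset.prod_congr rfl fun a _ => by rw [Fin.prod_univ_succ]
    have hP1 : (∏ j : Fin (n+1), (y 0 - x j)⁻¹)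
        = ((y 0 - x 0) * ∏ j : Fin n, (y 0 - x' j))⁻¹ := by
      rw [mul_inv, ← Finset.prod_inv_distrib, Fin.prod_univ_succ]
    have hP2 : (∏ k : Fin (n+1), (if k = 0 then (1:ℂ) else y 0 - y k))
        = ∏ k : Fin n, (y 0 - y' k) := by
      rw [Fin.prod_univ_succ]
      simp [Fin.succ_ne_zero]
      rfl
    have hP3 : (∏ j : Fin (n+1), (if j = 0 then (1:ℂ) else x j - x 0))
        = ∏ j : Fin n, (x' j - x 0) := by
      rw [Fin.prod_univ_succ]
      simp [Fin.succ_ne_zero]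
      rfl
    have hP4 : (∏ k : Fin (n+1), (if k = 0 then (1:ℂ) else (y k - x 0)⁻¹))
        = (∏ k : Fin n, (y' k - x 0))⁻¹ := by
      rw [← Finset.prod_inv_distrib, Fin.prod_univ_succ]
      simp [Fin.succ_ne_zero]
      rfl
    have hz : y 0 - x 0 ≠ 0 := h 0 0
    have hA : (∏ j : Fin n, (y 0 - x' j)) ≠ 0 :=
      Finset.prod_ne_zero_iff.mpr fun j _ => h j.succ 0
    have hB : (∏ k : Fin n, (y' k - x 0)) ≠ 0 :=
      Finset.prod_ne_zero_iff.mpr fun k _ => h 0 k.succ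
    have hDih : (∏ a : Fin n, ∏ b : Fin n, (y' b - x' a)) ≠ 0 :=
      Finset.prod_ne_zero_iff.mpr fun a _ =>
        Finset.prod_ne_zero_iff.mpr fun b _ => h' a b
    rw [hN, hD, hP1, hP2, hP3, hP4]
    field_simp


lemma exp_two_sub (a b : ℂ) : Complex.exp (2*a) - Complex.exp (2*b)
    = 2 * Complex.exp a * Complex.exp b * Complex.sinh (a-b) := by
  have e0 : 2 * Complex.exp a * Complex.exp b * Complex.sinh (a-b)
      = Complex.exp a * Complex.exp b * (2 * Complex.sinh (a-b)) := by ring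
  rw [e0, Complex.two_sinh, Complex.exp_sub, neg_sub, Complex.exp_sub]
  have e1 : Complex.exp (2*a) = Complex.exp a * Complex.exp a := by
    rw [← Complex.exp_add]; ring_nf
  have e2 : Complex.exp (2*b) = Complex.exp b * Complex.exp b := by
    rw [← Complex.exp_add]; ring_nf
  rw [e1, e2]
  field_simp [Complex.exp_ne_zero]

/-- Hyperbolic Cauchy determinant identity. -/
theorem hyperbolic_cauchy_determinant
    (n : ℕ) (hn : 1 ≤ n) (lam mu : Fin n → ℂ)
    (h : ∀ j k, Complex.sinh (mu k - lam j) ≠ 0) :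
    (Matrix.of fun j k : Fin n => (Complex.sinh (mu k - lam j))⁻¹).det =
      (∏ a, ∏ b ∈ Finset.Iio a, Complex.sinh (lam a - lam b) * Complex.sinh (mu b - mu a)) /
        ∏ a, ∏ b, Complex.sinh (mu b - lam a) := by
  obtain ⟨m, rfl⟩ : ∃ m, n = m + 1 := ⟨n - 1, by omega⟩
  set x : Fin (m+1) → ℂ := fun j => Complex.exp (2 * lam j) with hx
  set y : Fin (m+1) → ℂ := fun k => Complex.exp (2 * mu k) with hy
  set g : Fin (m+1) → ℂ := fun a => 2 * Complex.exp (lam a) * Complex.exp (mu a) with hg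
  have hxy : ∀ (a b : Fin (m+1)), y a - x b
      = 2 * Complex.exp (mu a) * Complex.exp (lam b) * Complex.sinh (mu a - lam b) :=
    fun a b => exp_two_sub (mu a) (lam b)
  have hxx : ∀ (a b : Fin (m+1)), x a - x b
      = 2 * Complex.exp (lam a) * Complex.exp (lam b) * Complex.sinh (lam a - lam b) :=
    fun a b => exp_two_sub (lam a) (lam b)
  have hyy : ∀ (a b : Fin (m+1)), y b - y a
      = 2 * Complex.exp (mu b) * Complex.exp (mu a) * Complex.sinh (mu b - mu a) :=
    fun a b => exp_two_sub (mu b) (mu a)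
  have h' : ∀ j k : Fin (m+1), y k - x j ≠ 0 := by
    intro j k
    rw [hxy k j]
    exact mul_ne_zero (mul_ne_zero (mul_ne_zero two_ne_zero (Complex.exp_ne_zero _))
      (Complex.exp_ne_zero _)) (h j k)
  -- Left-hand side
  have hM : (Matrix.of fun j k : Fin (m+1) => (Complex.sinh (mu k - lam j))⁻¹)
      = Matrix.of fun j k => (2 * Complex.exp (lam j)) *
          (Matrix.of (fun j k => Complex.exp (mu k) *
            (Matrix.of (fun j k : Fin (m+1) => (y k - x j)⁻¹) j k)) j k) := by
    ext j k
    simp only [Matrix.of_apply]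
    rw [hxy k j]
    rw [mul_inv, mul_inv, mul_inv]
    field_simp [Complex.exp_ne_zero, h j k]
  rw [hM, Matrix.det_mul_column, Matrix.det_mul_row, cauchy_det (m+1) x y h']
  -- Right-hand side: numerator
  have hT := pair_prod g
  have hNum : (∏ a, ∏ b ∈ Finset.Iio a,
        Complex.sinh (lam a - lam b) * Complex.sinh (mu b - mu a))
      = (∏ a, ∏ b ∈ Finset.Iio a, ((x a - x b) * (y b - y a)))
          * ((∏ a, g a) ^ (m + 1 - 1))⁻¹ := by
    rw [← hT, ← Finset.prod_inv_distrib, ← Finset.prod_mul_distrib]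
    refine Finset.prod_congr rfl fun a _ => ?_
    rw [← Finset.prod_inv_distrib, ← Finset.prod_mul_distrib]
    refine Finset.prod_congr rfl fun b _ => ?_
    rw [hxx a b, hyy a b, hg]
    simp only
    field_simp [Complex.exp_ne_zero]
  -- Right-hand side: denominator
  have hDen : (∏ a, ∏ b, Complex.sinh (mu b - lam a))
      = (∏ a, ∏ b, (y b - x a))
          * (∏ a : Fin (m+1), ∏ b : Fin (m+1), (2 * Complex.exp (mu b) * Complex.exp (lam a)))⁻¹ := by
    rw [← Finset.prod_inv_distrib, ← Finset.prod_mul_distrib]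
    refine Finset.prod_congr rfl fun a _ => ?_
    rw [← Finset.prod_inv_distrib, ← Finset.prod_mul_distrib]
    refine Finset.prod_congr rfl fun b _ => ?_
    rw [hxy b a]
    field_simp [Complex.exp_ne_zero]
  rw [hNum, hDen]
  -- bookkeeping of the exponential factors
  have hG : (∏ a, g a) = (∏ b : Fin (m+1), (2 * Complex.exp (mu b))) * ∏ a : Fin (m+1), Complex.exp (lam a) := by
    rw [← Finset.prod_mul_distrib]
    exact Finset.prod_congr rfl fun a _ => by rw [hg]; ring
  have hS : (∏ a : Fin (m+1), ∏ b : Fin (m+1), (2 * Complex.exp (mu b) * Complex.exp (lam a)))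
      = (∏ a, g a) ^ (m+1) := by
    have e1 : ∀ a : Fin (m+1), (∏ b : Fin (m+1), (2 * Complex.exp (mu b) * Complex.exp (lam a)))
        = (∏ b : Fin (m+1), (2 * Complex.exp (mu b))) * (Complex.exp (lam a)) ^ (m+1) := by
      intro a
      rw [Finset.prod_mul_distrib]
      congr 1
      rw [Finset.prod_const, Finset.card_univ, Fintype.card_fin]
    simp_rw [e1]
    rw [Finset.prod_mul_distrib, Finset.prod_const, Finset.card_univ, Fintype.card_fin,
      Finset.prod_pow, hG, mul_pow]
  have hW : (∏ j : Fin (m+1), (2 * Complex.exp (lam j))) * (∏ k : Fin (m+1), Complex.exp (mu k))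
      = ∏ a, g a := by
    rw [← Finset.prod_mul_distrib]
  have hG0 : (∏ a, g a) ≠ 0 := Finset.prod_ne_zero_iff.mpr fun a _ =>
    mul_ne_zero (mul_ne_zero two_ne_zero (Complex.exp_ne_zero _)) (Complex.exp_ne_zero _)
  have hD0 : (∏ a : Fin (m+1), ∏ b : Fin (m+1), (y b - x a)) ≠ 0 :=
    Finset.prod_ne_zero_iff.mpr fun a _ =>
      Finset.prod_ne_zero_iff.mpr fun b _ => h' a b
  rw [hS]
  have hmn : m + 1 - 1 = m := by omega
  rw [hmn, ← mul_assoc, hW]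
  set G := ∏ a, g a with hGdef
  set N := ∏ a : Fin (m+1), ∏ b ∈ Finset.Iio a, ((x a - x b) * (y b - y a)) with hNdef
  set D := ∏ a : Fin (m+1), ∏ b : Fin (m+1), (y b - x a) with hDdef
  have hGm : (G : ℂ) ^ m ≠ 0 := pow_ne_zero _ hG0
  have hGsucc : (G : ℂ) ^ (m+1) = G ^ m * G := pow_succ G m
  rw [hGsucc]
  field_simp

end
end
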